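/- arXiv:1103.5873 — 2 statements merged into one kernel-verified Lean document; each statement's English description precedes it below -/
import Mathlib

section
/- Let the setting be type A_N or type B_N and let (i,k) ∈ X. Any path p ∈ P_{i,k} is uniquely determined by its set of lower corners: if p, p′ ∈ P_{i,k} satisfy C_{p,−} = C_{p′,−}, then p = p′. -/
namespace Paper

/-- The ambient setting: type `A N` (with `N ≥ 1`) or type `B N ε`
(with `N ≥ 2` and `0 < ε < 1/2`). -/
inductive Setting where
  | A (N : ℕ)
  | B (N : ℕ) (ε : ℝ)

namespace Setting

/-- The rank `N`. -/
def N : Setting → ℕ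
  | A n => n
  | B n _ => n

/-- Validity of the parameters of the setting. -/
def valid : Setting → Prop
  | A n => 1 ≤ n
  | B n ε => 2 ≤ n ∧ 0 < ε ∧ ε < 1 / 2

end Setting

/-- The numbers `r_i` : in type A all equal `1`; in type B, `r_N = 1` and `r_i = 2` for `i < N`. -/
def rr : Setting → ℕ → ℕ
  | .A _, _ => 1
  | .B n _, j => if j = n then 1 else 2

/-- The set `X` in type `A_N`. -/
def XA (n : ℕ) : Set (ℕ × ℤ) :=
  {ik | 1 ≤ ik.1 ∧ ik.1 ≤ n ∧ ((ik.1 : ℤ) - ik.2) % 2 = 1}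

/-- The set `X` in type `B_N`. -/
def XB (n : ℕ) : Set (ℕ × ℤ) :=
  {ik | (ik.1 = n ∧ ik.2 % 2 = 1) ∨ (1 ≤ ik.1 ∧ ik.1 < n ∧ ik.2 % 2 = 0)}

/-- The set `X ⊆ I × ℤ`. -/
def X : Setting → Set (ℕ × ℤ)
  | .A n => XA n
  | .B n _ => XB n

/-- The set `W = {(i,k) : (i, k - r_i) ∈ X}`. -/
def W (S : Setting) : Set (ℕ × ℤ) :=
  {ik | (ik.1, ik.2 - (rr S ik.1 : ℤ)) ∈ X S}

/-- The `r`-th point of a path (a finite list of points of the plane). -/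
def pt (p : List (ℝ × ℝ)) (r : ℕ) : ℝ × ℝ := p.getD r (0, 0)

/-- The set of paths `𝒫_{i,k}` in type `A_N`. -/
def pathsA (n : ℕ) (i : ℕ) (k : ℤ) : Set (List (ℝ × ℝ)) :=
  {p | p.length = n + 2 ∧
    (∀ r, r < n + 2 → (pt p r).1 = (r : ℝ)) ∧
    (pt p 0).2 = (i : ℝ) + (k : ℝ) ∧
    (pt p (n + 1)).2 = (n : ℝ) + 1 - (i : ℝ) + (k : ℝ) ∧
    (∀ r, r ≤ n → (pt p (r + 1)).2 - (pt p r).2 = 1 ∨ (pt p (r + 1)).2 - (pt p r).2 = -1)}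

/-- The set of paths `𝒫_{N,ℓ}` in type `B_N`. -/
def pathsBspin (n : ℕ) (ε : ℝ) (l : ℤ) : Set (List (ℝ × ℝ)) :=
  {p | p.length = n + 1 ∧
    (if l % 4 = 3 then ∀ r, r < n → (pt p r).1 = 2 * (r : ℝ)
     else ∀ r, r < n → (pt p r).1 = 4 * (n : ℝ) - 2 - 2 * (r : ℝ)) ∧
    (pt p n).1 = 2 * (n : ℝ) - 1 ∧
    (pt p 0).2 = (l : ℝ) + 2 * (n : ℝ) - 1 ∧
    (∀ r, r + 2 ≤ n → (pt p (r + 1)).2 - (pt p r).2 = 2 ∨ (pt p (r + 1)).2 - (pt p r).2 = -2) ∧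
    ((pt p n).2 - (pt p (n - 1)).2 = 1 + ε ∨ (pt p n).2 - (pt p (n - 1)).2 = -(1 + ε))}

/-- The set of paths `𝒫_{i,k}` in type `B_N`. -/
def pathsB (n : ℕ) (ε : ℝ) (i : ℕ) (k : ℤ) : Set (List (ℝ × ℝ)) :=
  if i = n then pathsBspin n ε k
  else {p | ∃ a b : List (ℝ × ℝ),
    a ∈ pathsBspin n ε (k - (2 * (n : ℤ) - 2 * (i : ℤ) - 1)) ∧
    b ∈ pathsBspin n ε (k + (2 * (n : ℤ) - 2 * (i : ℤ) - 1)) ∧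
    p = a ++ b.reverse ∧
    (pt a n).1 = (pt b n).1 ∧ 0 < (pt a n).2 - (pt b n).2}

/-- The set of paths `𝒫_{i,k}`. -/
def P : Setting → ℕ → ℤ → Set (List (ℝ × ℝ))
  | .A n => pathsA n
  | .B n ε => pathsB n ε

/-- The map `ι : X → ℤ × ℤ` of type `B_N`. -/
def iotaB (n : ℕ) (ik : ℕ × ℤ) : ℤ × ℤ :=
  if ik.1 = n then (2 * (n : ℤ) - 1, ik.2)
  else if (2 * (n : ℤ) + ik.2 - 2 * (ik.1 : ℤ)) % 4 = 2 then (2 * (ik.1 : ℤ), ik.2)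
  else (4 * (n : ℤ) - 2 - 2 * (ik.1 : ℤ), ik.2)

/-- The corners of a path: `Cp S p true` is the set `C_{p,+}` of upper corners, and
`Cp S p false` is the set `C_{p,-}` of lower corners. -/
def Cp (S : Setting) (p : List (ℝ × ℝ)) (up : Bool) : Set (ℕ × ℤ) :=
  match S with
  | .A n =>
    {jl | 1 ≤ jl.1 ∧ jl.1 ≤ n ∧
      pt p jl.1 = ((jl.1 : ℝ), (jl.2 : ℝ)) ∧
      (pt p (jl.1 - 1)).2 = (jl.2 : ℝ) + (if up then 1 else -1) ∧
      (pt p (jl.1 + 1)).2 = (jl.2 : ℝ) + (if up then 1 else -1)}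
  | .B n ε =>
    {jl | jl ∈ XB n ∧
      ((∃ r : ℕ, 1 ≤ r ∧ r + 1 < p.length ∧
          pt p r = (((iotaB n jl).1 : ℝ), ((iotaB n jl).2 : ℝ)) ∧
          (iotaB n jl).1 ≠ 0 ∧ (iotaB n jl).1 ≠ 2 * (n : ℤ) - 1 ∧
          (iotaB n jl).1 ≠ 4 * (n : ℤ) - 2 ∧
          (if up then (pt p r).2 < (pt p (r - 1)).2 ∧ (pt p r).2 < (pt p (r + 1)).2
           else (pt p (r - 1)).2 < (pt p r).2 ∧ (pt p (r + 1)).2 < (pt p r).2))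
       ∨ (jl.1 = n ∧
          (if up then (2 * (n : ℝ) - 1, (jl.2 : ℝ) - ε) ∈ p ∧ (2 * (n : ℝ) - 1, (jl.2 : ℝ) + ε) ∉ p
           else (2 * (n : ℝ) - 1, (jl.2 : ℝ) + ε) ∈ p ∧ (2 * (n : ℝ) - 1, (jl.2 : ℝ) - ε) ∉ p)))}

/-- `p'` is obtained from `p` by replacing the point `q` by the point `q'`. -/
def Replace1 (p p' : List (ℝ × ℝ)) (q q' : ℝ × ℝ) : Prop :=
  ∃ r : ℕ, r < p.length ∧ pt p r = q ∧ p'.length = p.length ∧ pt p' r = q' ∧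
    ∀ s, s < p.length → s ≠ r → pt p' s = pt p s

/-- `p'` is obtained from `p` by replacing the point `q1` by `q1'` and the point `q2` by `q2'`. -/
def Replace2 (p p' : List (ℝ × ℝ)) (q1 q1' q2 q2' : ℝ × ℝ) : Prop :=
  ∃ r s : ℕ, r < p.length ∧ s < p.length ∧ r ≠ s ∧ pt p r = q1 ∧ pt p s = q2 ∧
    p'.length = p.length ∧ pt p' r = q1' ∧ pt p' s = q2' ∧
    ∀ u, u < p.length → u ≠ r → u ≠ s → pt p' u = pt p u

/-- The path `p` can be lowered at `(j, l)`: `(j, l - r_j) ∈ C_{p,+}` and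
`(j, l + r_j) ∉ C_{p,+}`. -/
def CanLower (S : Setting) (p : List (ℝ × ℝ)) (j : ℕ) (l : ℤ) : Prop :=
  (j, l - (rr S j : ℤ)) ∈ Cp S p true ∧ (j, l + (rr S j : ℤ)) ∉ Cp S p true

/-- `p'` is the result of the lowering move at `(j,l)` applied to the path `p ∈ 𝒫_{i,k}`;
written `p' = p 𝒜_{j,l}⁻¹`. -/
def LoweredTo (S : Setting) (i : ℕ) (k : ℤ) (j : ℕ) (l : ℤ)
    (p p' : List (ℝ × ℝ)) : Prop :=
  p ∈ P S i k ∧ p' ∈ P S i k ∧ CanLower S p j l ∧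
  (match S with
   | .A _ => Replace1 p p' ((j : ℝ), (l : ℝ) - 1) ((j : ℝ), (l : ℝ) + 1)
   | .B n ε =>
     if j = n then
       Replace1 p p' (2 * (n : ℝ) - 1, (l : ℝ) - 1 - ε) (2 * (n : ℝ) - 1, (l : ℝ) + 1 + ε)
     else if j = n - 1 then
       Replace2 p p'
         (((iotaB n (j, l - 2)).1 : ℝ), (l : ℝ) - 2) (((iotaB n (j, l - 2)).1 : ℝ), (l : ℝ) + 2)
         (2 * (n : ℝ) - 1, (l : ℝ) - 1 + ε) (2 * (n : ℝ) - 1, (l : ℝ) + 1 - ε)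
     else
       Replace1 p p'
         (((iotaB n (j, l - 2)).1 : ℝ), (l : ℝ) - 2) (((iotaB n (j, l - 2)).1 : ℝ), (l : ℝ) + 2))

/-- The path `p` can be raised at `(j,l)`: it is of the form `p' 𝒜_{j,l}⁻¹`. -/
def CanRaise (S : Setting) (i : ℕ) (k : ℤ) (p : List (ℝ × ℝ)) (j : ℕ) (l : ℤ) : Prop :=
  ∃ p', LoweredTo S i k j l p' p

/-- The monomial group `ℳ`, realised as exponent functions: the free abelian group on the
symbols `Y_{i,k}`, `(i,k) ∈ X`, is identified with finitely supported functions `(ℕ × ℤ) → ℤ`,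
written additively. -/
def Y (x : ℕ × ℤ) : (ℕ × ℤ) → ℤ := fun z => if z = x then 1 else 0

noncomputable def ind (s : Prop) : ℤ := @ite ℤ s (Classical.propDecidable s) 1 0

/-- The monomial `m(p)` of a path: `∏ Y_{j,l}` over upper corners times `∏ Y_{j,l}⁻¹`
over lower corners. -/
noncomputable def mon (S : Setting) (p : List (ℝ × ℝ)) : (ℕ × ℤ) → ℤ :=
  fun x => ind (x ∈ Cp S p true) - ind (x ∈ Cp S p false)

/-- The monomials `A_{j,l}`, with the conventions `Y_{0,·} = Y_{N+1,·} = 1`. -/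
def Amon (S : Setting) (j : ℕ) (l : ℤ) : (ℕ × ℤ) → ℤ :=
  match S with
  | .A n =>
      Y (j, l + 1) + Y (j, l - 1) - (if j = 1 then 0 else Y (j - 1, l))
        - (if j = n then 0 else Y (j + 1, l))
  | .B n _ =>
      if j = n then Y (n, l + 1) + Y (n, l - 1) - Y (n - 1, l)
      else if j = n - 1 then
        Y (n - 1, l + 2) + Y (n - 1, l - 2) - (if j = 1 then 0 else Y (n - 2, l))
          - Y (n, l + 1) - Y (n, l - 1)
      else
        Y (j, l + 2) + Y (j, l - 2) - (if j = 1 then 0 else Y (j - 1, l)) - Y (j + 1, l)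

/-- A monomial is dominant iff all its exponents are nonnegative. -/
def Dominant (m : (ℕ × ℤ) → ℤ) : Prop := ∀ x, 0 ≤ m x

/-- A monomial is anti-dominant iff all its exponents are nonpositive. -/
def AntiDominant (m : (ℕ × ℤ) → ℤ) : Prop := ∀ x, m x ≤ 0

/-- `(i',k')` is in snake position with respect to `(i,k)`. -/
def SnakePos : Setting → ℕ × ℤ → ℕ × ℤ → Prop
  | .A _, ik, ik' => |(ik'.1 : ℤ) - (ik.1 : ℤ)| + 2 ≤ ik'.2 - ik.2
  | .B n _, ik, ik' =>
      if ik.1 = n ∧ ik'.1 = n then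
        2 ≤ ik'.2 - ik.2 ∧ (ik'.2 - ik.2) % 4 = 2
      else if ik.1 = n ∨ ik'.1 = n then
        2 * |(ik'.1 : ℤ) - (ik.1 : ℤ)| + 3 ≤ ik'.2 - ik.2 ∧
          (ik'.2 - ik.2) % 4 = (2 * |(ik'.1 : ℤ) - (ik.1 : ℤ)| - 1) % 4
      else
        2 * |(ik'.1 : ℤ) - (ik.1 : ℤ)| + 4 ≤ ik'.2 - ik.2 ∧
          (ik'.2 - ik.2) % 4 = (2 * |(ik'.1 : ℤ) - (ik.1 : ℤ)|) % 4

/-- A snake: a sequence of points of `X`, each in snake position w.r.t. the previous one. -/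
def IsSnake (S : Setting) {T : ℕ} (w : Fin T → ℕ × ℤ) : Prop :=
  (∀ t, w t ∈ X S) ∧
  ∀ (t : Fin T) (h : (t : ℕ) + 1 < T), SnakePos S (w t) (w ⟨(t : ℕ) + 1, h⟩)

/-- `p` is strictly above `p'`. -/
def StrictlyAbove (p p' : List (ℝ × ℝ)) : Prop :=
  ∀ a ∈ p, ∀ b ∈ p', a.1 = b.1 → a.2 < b.2

/-- A tuple of paths is non-overlapping. -/
def NonOverlapping {T : ℕ} (ps : Fin T → List (ℝ × ℝ)) : Prop :=
  ∀ s t : Fin T, s < t → StrictlyAbove (ps s) (ps t)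

/-- The set `𝒫̄` of non-overlapping tuples of paths attached to a snake. -/
def PBar (S : Setting) {T : ℕ} (w : Fin T → ℕ × ℤ) : Set (Fin T → List (ℝ × ℝ)) :=
  {ps | (∀ t, ps t ∈ P S (w t).1 (w t).2) ∧ NonOverlapping ps}

/-- The product `∏_t m(p_t)` of the monomials of a tuple of paths. -/
noncomputable def tmon (S : Setting) {T : ℕ} (ps : Fin T → List (ℝ × ℝ)) : (ℕ × ℤ) → ℤ :=
  ∑ t, mon S (ps t)

/-- Lowering move at `jl` on a tuple of paths: one component is lowered, the others
are unchanged. -/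
def TLoweredTo (S : Setting) {T : ℕ} (w : Fin T → ℕ × ℤ) (jl : ℕ × ℤ)
    (ps ps' : Fin T → List (ℝ × ℝ)) : Prop :=
  ∃ t, LoweredTo S (w t).1 (w t).2 jl.1 jl.2 (ps t) (ps' t) ∧ ∀ s, s ≠ t → ps' s = ps s

/-- Sequences of raising/lowering moves on a single path; the list records, for each move,
whether it was a lowering move (`true`) or a raising move (`false`), and its site. -/
inductive MoveSeq (S : Setting) (i : ℕ) (k : ℤ) :
    List (ℝ × ℝ) → List (ℝ × ℝ) → List (Bool × (ℕ × ℤ)) → Prop where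
  | nil (p : List (ℝ × ℝ)) : MoveSeq S i k p p []
  | lower {p q r : List (ℝ × ℝ)} {jl : ℕ × ℤ} {ms : List (Bool × (ℕ × ℤ))} :
      jl ∈ W S → LoweredTo S i k jl.1 jl.2 p q → MoveSeq S i k q r ms →
      MoveSeq S i k p r ((true, jl) :: ms)
  | raise {p q r : List (ℝ × ℝ)} {jl : ℕ × ℤ} {ms : List (Bool × (ℕ × ℤ))} :
      jl ∈ W S → LoweredTo S i k jl.1 jl.2 q p → MoveSeq S i k q r ms →
      MoveSeq S i k p r ((false, jl) :: ms)

/-- Sequences of raising/lowering moves on tuples of paths, all of whose intermediate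
tuples are non-overlapping. -/
inductive TMoveSeq (S : Setting) {T : ℕ} (w : Fin T → ℕ × ℤ) :
    (Fin T → List (ℝ × ℝ)) → (Fin T → List (ℝ × ℝ)) → List (Bool × (ℕ × ℤ)) → Prop where
  | nil (ps : Fin T → List (ℝ × ℝ)) : TMoveSeq S w ps ps []
  | lower {ps qs rs : Fin T → List (ℝ × ℝ)} {jl : ℕ × ℤ} {ms : List (Bool × (ℕ × ℤ))} :
      jl ∈ W S → TLoweredTo S w jl ps qs → NonOverlapping qs →
      TMoveSeq S w qs rs ms → TMoveSeq S w ps rs ((true, jl) :: ms)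
  | raise {ps qs rs : Fin T → List (ℝ × ℝ)} {jl : ℕ × ℤ} {ms : List (Bool × (ℕ × ℤ))} :
      jl ∈ W S → TLoweredTo S w jl qs ps → NonOverlapping qs →
      TMoveSeq S w qs rs ms → TMoveSeq S w ps rs ((false, jl) :: ms)

/-- Sequences of lowering moves on tuples of paths, all of whose intermediate tuples
are non-overlapping; the list records the sites, in order. -/
inductive TLowerSeq (S : Setting) {T : ℕ} (w : Fin T → ℕ × ℤ) :
    (Fin T → List (ℝ × ℝ)) → (Fin T → List (ℝ × ℝ)) → List (ℕ × ℤ) → Prop where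
  | nil (ps : Fin T → List (ℝ × ℝ)) : TLowerSeq S w ps ps []
  | cons {ps qs rs : Fin T → List (ℝ × ℝ)} {jl : ℕ × ℤ} {ms : List (ℕ × ℤ)} :
      jl ∈ W S → TLoweredTo S w jl ps qs → NonOverlapping qs →
      TLowerSeq S w qs rs ms → TLowerSeq S w ps rs (jl :: ms)

/-- Weak order on paths with the same x-coordinates: `p` is weakly above `p'`. -/
def WeaklyAbove (p p' : List (ℝ × ℝ)) : Prop :=
  p.length = p'.length ∧ ∀ r, r < p.length → (pt p r).2 ≤ (pt p' r).2

/-- `p` is weakly below `p'`. -/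
def WeaklyBelow (p p' : List (ℝ × ℝ)) : Prop :=
  p.length = p'.length ∧ ∀ r, r < p.length → (pt p' r).2 ≤ (pt p r).2

/-- The path `top(p, p')`. -/
def topPath (p p' : List (ℝ × ℝ)) : List (ℝ × ℝ) :=
  List.zipWith (fun a b => (a.1, min a.2 b.2)) p p'

/-- The distinguished point contained in the highest path `p⁺_{i,k}`. -/
def highPoint : Setting → ℕ → ℤ → ℝ × ℝ
  | .A _, i, k => ((i : ℝ), (k : ℝ))
  | .B n ε, i, k =>
      if i = n then (2 * (n : ℝ) - 1, (k : ℝ) - ε)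
      else (((iotaB n (i, k)).1 : ℝ), ((iotaB n (i, k)).2 : ℝ))

/-- The distinguished point contained in the lowest path `p⁻_{i,k}`. -/
def lowPoint : Setting → ℕ → ℤ → ℝ × ℝ
  | .A n, i, k => ((n : ℝ) + 1 - (i : ℝ), (k : ℝ) + (n : ℝ) + 1)
  | .B n ε, i, k =>
      if i = n then (2 * (n : ℝ) - 1, (k : ℝ) + 4 * (n : ℝ) - 2 + ε)
      else (((iotaB n (i, k + 4 * (n : ℤ) - 2)).1 : ℝ),
            ((iotaB n (i, k + 4 * (n : ℤ) - 2)).2 : ℝ))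

/-- The highest path `p⁺_{i,k}` : the path of `𝒫_{i,k}` with no lower corners. -/
noncomputable def highestPath (S : Setting) (i : ℕ) (k : ℤ) : List (ℝ × ℝ) :=
  Classical.epsilon fun p => p ∈ P S i k ∧ Cp S p false = ∅

/-- The lowest path `p⁻_{i,k}` : the path of `𝒫_{i,k}` with no upper corners. -/
noncomputable def lowestPath (S : Setting) (i : ℕ) (k : ℤ) : List (ℝ × ℝ) :=
  Classical.epsilon fun p => p ∈ P S i k ∧ Cp S p true = ∅



section Helpers

lemma stairs (c : ℝ) (hc : 0 < c) (f g : ℕ → ℝ) (a B r : ℕ)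
    (har : a < r)
    (hf : ∀ u, a ≤ u → u < B → f (u+1) = f u + c ∨ f (u+1) = f u - c)
    (hg : ∀ u, a ≤ u → u < B → g (u+1) = g u + c ∨ g (u+1) = g u - c)
    (hmin : ∀ u, a ≤ u → u < r → f u = g u)
    (hup : f r = f (r-1) + c) (hdn : g r = g (r-1) - c)
    (hLf : ∀ t, a < t → t < B → f (t-1) < f t → f (t+1) < f t → g t = f t) :
    ∀ u, r ≤ u → u ≤ B → f u = f (u - 1) + c ∧ ∃ m : ℤ, 1 ≤ m ∧ f u = g u + 2*m*c := by
  intro u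
  induction u with
  | zero => intro h1 _; omega
  | succ v ih =>
    intro hrv hvB
    have hv1 : v + 1 - 1 = v := rfl
    rcases Nat.lt_or_ge r (v+1) with hlt | hge
    · have hrv' : r ≤ v := by omega
      obtain ⟨hstep, m, hm, hgap⟩ := ih hrv' (by omega)
      have hvB2 : v < B := by omega
      have hav : a ≤ v := by omega
      have hmc : (0:ℝ) < 2*m*c := by
        have h1 : (1:ℝ) ≤ (m:ℝ) := by exact_mod_cast hm
        nlinarith
      have hfup : f (v+1) = f v + c := by
        rcases hf v hav hvB2 with h | h
        · exact h
        · exfalso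
          have hmax : g v = f v :=
            hLf v (by omega) hvB2 (by linarith) (by linarith)
          linarith
      rw [hv1]
      refine ⟨hfup, ?_⟩
      rcases hg v hav hvB2 with h | h
      · exact ⟨m, hm, by linarith⟩
      · refine ⟨m+1, by omega, ?_⟩
        push_cast
        linarith
    · have hvr : v + 1 = r := by omega
      rw [hv1] at *
      rw [hvr] at *
      have hfv : f (r-1) = g (r-1) := hmin (r-1) (by omega) (by omega)
      have hrv1 : r - 1 = v := by omega
      rw [hrv1] at hup hdn hfv
      refine ⟨hup, 1, le_refl _, ?_⟩
      push_cast
      linarith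

lemma pt_eq_getElem (p : List (ℝ × ℝ)) (r : ℕ) (h : r < p.length) : pt p r = p[r] := by
  simp [pt, List.getD_eq_getElem?_getD, List.getElem?_eq_getElem h]

lemma pt_append_left (p q : List (ℝ × ℝ)) (r : ℕ) (h : r < p.length) :
    pt (p ++ q) r = pt p r := by
  rw [pt_eq_getElem _ _ h, pt_eq_getElem (p ++ q) r (by simp; omega)]
  exact List.getElem_append_left h

lemma pt_append_right (p q : List (ℝ × ℝ)) (r : ℕ) (h : p.length ≤ r)
    (h2 : r < p.length + q.length) :
    pt (p ++ q) r = pt q (r - p.length) := by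
  rw [pt_eq_getElem q _ (by omega), pt_eq_getElem (p ++ q) r (by simp; omega)]
  exact List.getElem_append_right h

lemma pt_reverse (p : List (ℝ × ℝ)) (r : ℕ) (h : r < p.length) :
    pt p.reverse r = pt p (p.length - 1 - r) := by
  rw [pt_eq_getElem _ _ (by simpa using h), pt_eq_getElem p _ (by omega)]
  exact List.getElem_reverse _

lemma list_eq_of_pt (p q : List (ℝ × ℝ)) (hl : p.length = q.length)
    (h : ∀ r, r < p.length → pt p r = pt q r) : p = q := by
  apply List.ext_getElem hl
  intro r h1 h2
  rw [← pt_eq_getElem _ _ h1, ← pt_eq_getElem _ _ h2]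
  exact h r h1

lemma mem_iff_pt (p : List (ℝ × ℝ)) (x : ℝ × ℝ) :
    x ∈ p ↔ ∃ r, r < p.length ∧ pt p r = x := by
  rw [List.mem_iff_getElem]
  constructor
  · rintro ⟨r, h, rfl⟩; exact ⟨r, h, pt_eq_getElem _ _ h⟩
  · rintro ⟨r, h, hx⟩; exact ⟨r, h, by rw [← pt_eq_getElem _ _ h, hx]⟩

end Helpers

section TypeA

/-- uniqueness for type A -/
lemma stmtA (n : ℕ) (hn : 1 ≤ n) (i : ℕ) (k : ℤ) (hik : (i, k) ∈ XA n)
    (p p' : List (ℝ × ℝ)) (hp : p ∈ pathsA n i k) (hp' : p' ∈ pathsA n i k)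
    (h : Cp (.A n) p false = Cp (.A n) p' false) : p = p' := by
  obtain ⟨hl, hx, h0, hN, hst⟩ := hp
  obtain ⟨hl', hx', h0', hN', hst'⟩ := hp'
  set f : ℕ → ℝ := fun u => (pt p u).2 with hf
  set g : ℕ → ℝ := fun u => (pt p' u).2 with hg
  -- integrality of values
  have hint : ∀ u, u < n + 2 → ∃ v : ℤ, f u = v := by
    intro u
    induction u with
    | zero => intro _; exact ⟨i + k, by rw [hf]; push_cast; rw [h0]⟩
    | succ v ih =>
      intro hv
      obtain ⟨w, hw⟩ := ih (by omega)
      rcases hst v (by omega) with hs | hs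
      · exact ⟨w + 1, by push_cast; rw [show f (v+1) = f v + 1 by rw[hf]; simp only []; linarith [hs], hw]⟩
      · exact ⟨w - 1, by push_cast; rw [show f (v+1) = f v - 1 by rw[hf]; simp only []; linarith [hs], hw]⟩
  have hint' : ∀ u, u < n + 2 → ∃ v : ℤ, g u = v := by
    intro u
    induction u with
    | zero => intro _; exact ⟨i + k, by rw [hg]; push_cast; rw [h0']⟩
    | succ v ih =>
      intro hv
      obtain ⟨w, hw⟩ := ih (by omega)
      rcases hst' v (by omega) with hs | hs
      · exact ⟨w + 1, by push_cast; rw [show g (v+1) = g v + 1 by rw[hg]; simp only []; linarith [hs], hw]⟩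
      · exact ⟨w - 1, by push_cast; rw [show g (v+1) = g v - 1 by rw[hg]; simp only []; linarith [hs], hw]⟩
  -- corner transfer
  have hLf : ∀ t, 0 < t → t < n + 1 → f (t-1) < f t → f (t+1) < f t → g t = f t := by
    intro t ht htn h1 h2
    obtain ⟨v, hv⟩ := hint t (by omega)
    have hstep1 : f t = f (t-1) + 1 := by
      rcases hst (t-1) (by omega) with hs | hs <;>
        rw [show t - 1 + 1 = t by omega] at hs <;> [linarith; linarith]
    have hstep2 : f (t+1) = f t - 1 := by
      rcases hst t (by omega) with hs | hs <;> [linarith; linarith]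
    have hmem : ((t : ℕ), v) ∈ Cp (.A n) p false := by
      refine ⟨by omega, by omega, ?_, ?_, ?_⟩
      · have := hx t (by omega)
        rw [Prod.ext_iff]
        constructor
        · simpa using this
        · simpa using hv
      · simp only [if_neg (Bool.false_ne_true)]
        rw [show (pt p (t-1)).2 = f (t-1) from rfl]
        push_cast
        linarith
      · simp only [if_neg (Bool.false_ne_true)]
        rw [show (pt p (t+1)).2 = f (t+1) from rfl]
        push_cast
        linarith
    rw [h] at hmem
    obtain ⟨_, _, hm3, _, _⟩ := hmem
    have : g t = v := by
      have := congrArg Prod.snd hm3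
      simpa using this
    rw [this, hv]
  have hLg : ∀ t, 0 < t → t < n + 1 → g (t-1) < g t → g (t+1) < g t → f t = g t := by
    intro t ht htn h1 h2
    obtain ⟨v, hv⟩ := hint' t (by omega)
    have hstep1 : g t = g (t-1) + 1 := by
      rcases hst' (t-1) (by omega) with hs | hs <;>
        rw [show t - 1 + 1 = t by omega] at hs <;> [linarith; linarith]
    have hstep2 : g (t+1) = g t - 1 := by
      rcases hst' t (by omega) with hs | hs <;> [linarith; linarith]
    have hmem : ((t : ℕ), v) ∈ Cp (.A n) p' false := by
      refine ⟨by omega, by omega, ?_, ?_, ?_⟩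
      · have := hx' t (by omega)
        rw [Prod.ext_iff]
        constructor
        · simpa using this
        · simpa using hv
      · simp only [if_neg (Bool.false_ne_true)]
        rw [show (pt p' (t-1)).2 = g (t-1) from rfl]
        push_cast
        linarith
      · simp only [if_neg (Bool.false_ne_true)]
        rw [show (pt p' (t+1)).2 = g (t+1) from rfl]
        push_cast
        linarith
    rw [← h] at hmem
    obtain ⟨_, _, hm3, _, _⟩ := hmem
    have : f t = v := by
      have := congrArg Prod.snd hm3
      simpa using this
    rw [this, hv]
  -- main argument
  by_contra hne
  have hdiff : ∃ u, u < n + 2 ∧ f u ≠ g u := by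
    by_contra hall
    push_neg at hall
    apply hne
    apply list_eq_of_pt p p' (by rw [hl, hl'])
    intro u hu
    rw [hl] at hu
    have h1 := hx u hu
    have h2 := hx' u hu
    have := hall u hu
    exact Prod.ext (by rw [h1, h2]) this
  classical
  obtain ⟨u0, hu0, hfu0⟩ := hdiff
  have hexr : ∃ u, f u ≠ g u := ⟨u0, hfu0⟩
  set r := Nat.find hexr with hr
  have hrne : f r ≠ g r := Nat.find_spec hexr
  have hrmin : ∀ u, u < r → f u = g u := by
    intro u hu
    by_contra hc
    have h2 : r ≤ u := by rw [hr]; exact Nat.find_le hc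
    omega
  have hr0 : 0 < r := by
    rcases Nat.eq_zero_or_pos r with h0r | h0r
    · exfalso; apply hrne; rw [h0r]; show (pt p 0).2 = (pt p' 0).2; rw [h0, h0']
    · exact h0r
  have hrn : r < n + 1 := by
    by_contra hc
    push_neg at hc
    rcases Nat.lt_or_ge r (n+2) with h1 | h1
    · have : r = n + 1 := by omega
      apply hrne
      rw [this]
      show (pt p (n+1)).2 = (pt p' (n+1)).2
      rw [hN, hN']
    · apply hrne
      show (pt p r).2 = (pt p' r).2
      rw [pt, pt, List.getD_eq_getElem?_getD, List.getD_eq_getElem?_getD,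
        List.getElem?_eq_none (by omega), List.getElem?_eq_none (by omega)]
  have hfr := hrmin (r-1) (by omega)
  have hfst : f r = f (r-1) + 1 ∨ f r = f (r-1) - 1 := by
    have := hst (r-1) (by omega)
    rw [show r - 1 + 1 = r by omega] at this
    rcases this with h1 | h1
    · left; linarith
    · right; linarith
  have hgst : g r = g (r-1) + 1 ∨ g r = g (r-1) - 1 := by
    have := hst' (r-1) (by omega)
    rw [show r - 1 + 1 = r by omega] at this
    rcases this with h1 | h1
    · left; linarith
    · right; linarith
  have hstepf : ∀ u, 0 ≤ u → u < n + 1 → f (u+1) = f u + 1 ∨ f (u+1) = f u - 1 := by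
    intro u _ hu
    rcases hst u (by omega) with h1 | h1
    · left; linarith
    · right; linarith
  have hstepg : ∀ u, 0 ≤ u → u < n + 1 → g (u+1) = g u + 1 ∨ g (u+1) = g u - 1 := by
    intro u _ hu
    rcases hst' u (by omega) with h1 | h1
    · left; linarith
    · right; linarith
  rcases hfst with hf1 | hf1 <;> rcases hgst with hg1 | hg1
  · exact hrne (by rw [hf1, hg1, hfr])
  · obtain ⟨_, m, hm, hgap⟩ := stairs 1 one_pos f g 0 (n+1) r hr0 hstepf hstepg
      (fun u _ hu => hrmin u hu) hf1 hg1 hLf (n+1) (by omega) (le_refl _)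
    have hend : f (n+1) = g (n+1) := by show (pt p (n+1)).2 = (pt p' (n+1)).2; rw [hN, hN']
    have : (1:ℝ) ≤ (m:ℝ) := by exact_mod_cast hm
    nlinarith
  · obtain ⟨_, m, hm, hgap⟩ := stairs 1 one_pos g f 0 (n+1) r hr0 hstepg hstepf
      (fun u _ hu => (hrmin u hu).symm) hg1 hf1 hLg (n+1) (by omega) (le_refl _)
    have hend : f (n+1) = g (n+1) := by show (pt p (n+1)).2 = (pt p' (n+1)).2; rw [hN, hN']
    have : (1:ℝ) ≤ (m:ℝ) := by exact_mod_cast hm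
    nlinarith
  · exact hrne (by rw [hf1, hg1, hfr])

end TypeA

section TypeB

/-- The x-coordinate of the `u`-th point of a spin path of `𝒫_{N,l}`. -/
def xS (n : ℕ) (l : ℤ) (u : ℕ) : ℤ :=
  if u < n then (if l % 4 = 3 then 2*u else 4*n-2-2*u) else 2*n-1

lemma xS_inj (n : ℕ) (l : ℤ) (hn : 2 ≤ n) (r t : ℕ) (hr : r < n+1) (ht : t < n+1)
    (he : xS n l r = xS n l t) : r = t := by
  unfold xS at he
  split_ifs at he <;> omega

lemma spinVal {n : ℕ} {ε : ℝ} {l : ℤ} (hl : l % 2 = 1) {q : List (ℝ × ℝ)}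
    (hq : q ∈ pathsBspin n ε l) :
    ∀ t, t < n → ∃ v : ℤ, (pt q t).2 = (v:ℝ) ∧ (2*(n:ℤ) + v - 2*(t:ℤ)) % 4 = (l - 1) % 4 := by
  obtain ⟨hlen, hxco, hxn, h0, hst, hlast⟩ := hq
  intro t
  induction t with
  | zero =>
    intro _
    refine ⟨l + 2*n - 1, ?_, by omega⟩
    push_cast
    rw [h0]
  | succ v ih =>
    intro hv
    obtain ⟨w, hw, hm⟩ := ih (by omega)
    rcases hst v (by omega) with hs | hs
    · exact ⟨w + 2, by push_cast; linarith, by omega⟩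
    · exact ⟨w - 2, by push_cast; linarith, by omega⟩

lemma spinX {n : ℕ} {ε : ℝ} {l : ℤ} (hl : l % 2 = 1) {q : List (ℝ × ℝ)}
    (hq : q ∈ pathsBspin n ε l) :
    ∀ u, u < n + 1 → (pt q u).1 = ((xS n l u : ℤ) : ℝ) := by
  obtain ⟨hlen, hxco, hxn, h0, hst, hlast⟩ := hq
  intro u hu
  rcases Nat.lt_or_ge u n with h1 | h1
  · by_cases hl4 : l % 4 = 3
    · rw [if_pos hl4] at hxco
      rw [hxco u h1]
      unfold xS
      rw [if_pos h1, if_pos hl4]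
      push_cast; ring
    · rw [if_neg hl4] at hxco
      rw [hxco u h1]
      unfold xS
      rw [if_pos h1, if_neg hl4]
      push_cast
      ring
  · have : u = n := by omega
    subst this
    rw [hxn]
    unfold xS
    rw [if_neg (by omega)]
    push_cast
    ring

lemma xS_ne_mid (n : ℕ) (l : ℤ) (hn : 2 ≤ n) (r : ℕ) (hr : r < n) :
    xS n l r ≠ 2*(n:ℤ)-1 := by
  unfold xS
  split_ifs <;> omega

lemma transferLS {n : ℕ} {ε : ℝ} {l : ℤ} (hn : 2 ≤ n) (hε : 0 < ε) (hl : l % 2 = 1)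
    {p p' : List (ℝ × ℝ)} (hp : p ∈ pathsBspin n ε l) (hp' : p' ∈ pathsBspin n ε l)
    (h : Cp (.B n ε) p false = Cp (.B n ε) p' false)
    (t : ℕ) (ht1 : 1 ≤ t) (ht2 : t < n)
    (hlo : (pt p (t-1)).2 < (pt p t).2) (hhi : (pt p (t+1)).2 < (pt p t).2) :
    (pt p' t).2 = (pt p t).2 := by
  obtain ⟨v, hv, hm⟩ := spinVal hl hp t ht2
  have hlen : p.length = n + 1 := hp.1
  have hlen' : p'.length = n + 1 := hp'.1
  have hX := spinX hl hp
  have hX' := spinX hl hp'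
  have hxv : iotaB n ((t : ℕ), v) = (xS n l t, v) := by
    unfold iotaB xS
    by_cases hl4 : l % 4 = 3
    · rw [if_neg (by omega : ¬ (t:ℕ) = n),
        if_pos (by simp only; omega : (2*(n:ℤ) + ((t:ℕ),v).2 - 2*((t:ℕ),v).1) % 4 = 2),
        if_pos ht2, if_pos hl4]
    · rw [if_neg (by omega : ¬ (t:ℕ) = n),
        if_neg (by simp only; omega : ¬ (2*(n:ℤ) + ((t:ℕ),v).2 - 2*((t:ℕ),v).1) % 4 = 2),
        if_pos ht2, if_neg hl4]
  have hxne : xS n l t ≠ 0 ∧ xS n l t ≠ 2*(n:ℤ)-1 ∧ xS n l t ≠ 4*(n:ℤ)-2 := by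
    unfold xS
    split_ifs <;> omega
  have hmem : ((t : ℕ), v) ∈ Cp (.B n ε) p false := by
    refine ⟨Or.inr ⟨ht1, ht2, by omega⟩, Or.inl ⟨t, ht1, by omega, ?_, ?_, ?_, ?_, ?_⟩⟩
    · rw [hxv]
      exact Prod.ext (by rw [hX t (by omega)]) hv
    · rw [hxv]; exact hxne.1
    · rw [hxv]; exact hxne.2.1
    · rw [hxv]; exact hxne.2.2
    · simp only [Bool.false_eq_true, if_false]
      exact ⟨hlo, hhi⟩
  rw [h] at hmem
  obtain ⟨hXB', hor⟩ := hmem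
  rcases hor with ⟨r, hr1, hr2, hptr, _, _, _, _⟩ | ⟨hjn, _⟩
  · have hrn : r < n + 1 := by omega
    have hx1 : (pt p' r).1 = ((xS n l t : ℤ) : ℝ) := by
      rw [hptr, hxv]
    have : xS n l r = xS n l t := by
      have := hX' r hrn
      rw [this] at hx1
      exact_mod_cast hx1
    have hrt : r = t := xS_inj n l hn r t hrn (by omega) this
    subst hrt
    rw [hv]
    have := congrArg Prod.snd hptr
    rw [hxv] at this
    exact this
  · exact absurd hjn (by omega)

lemma transferSS {n : ℕ} {ε : ℝ} {l : ℤ} (hn : 2 ≤ n) (hε : 0 < ε) (hl : l % 2 = 1)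
    {p p' : List (ℝ × ℝ)} (hp : p ∈ pathsBspin n ε l) (hp' : p' ∈ pathsBspin n ε l)
    (h : Cp (.B n ε) p false = Cp (.B n ε) p' false)
    (hup : (pt p n).2 = (pt p (n-1)).2 + 1 + ε) :
    (pt p' n).2 = (pt p n).2 := by
  obtain ⟨v, hv, hm⟩ := spinVal hl hp (n-1) (by omega)
  have hlen : p.length = n + 1 := hp.1
  have hlen' : p'.length = n + 1 := hp'.1
  have hX := spinX hl hp
  have hX' := spinX hl hp'
  have hXmid : (pt p n).1 = 2*(n:ℝ) - 1 := by
    have := hX n (by omega)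
    rw [this]
    unfold xS
    rw [if_neg (by omega)]
    push_cast; ring
  have hXmid' : (pt p' n).1 = 2*(n:ℝ) - 1 := by
    have := hX' n (by omega)
    rw [this]
    unfold xS
    rw [if_neg (by omega)]
    push_cast; ring
  have hmem : ((n : ℕ), v + 1) ∈ Cp (.B n ε) p false := by
    refine ⟨Or.inl ⟨rfl, by omega⟩, Or.inr ⟨rfl, ?_⟩⟩
    simp only [Bool.false_eq_true, if_false]
    constructor
    · rw [mem_iff_pt]
      refine ⟨n, by omega, ?_⟩
      refine Prod.ext hXmid ?_
      simp only
      rw [hup, hv]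
      push_cast; ring
    · rw [mem_iff_pt]
      rintro ⟨r, hr, hpr0⟩
      rcases Nat.lt_or_ge r n with h1 | h1
      · have hx1 := congrArg Prod.fst hpr0
        rw [hX r (by omega)] at hx1
        simp only at hx1
        have : (xS n l r : ℝ) = ((2*(n:ℤ) - 1 : ℤ) : ℝ) := by push_cast; push_cast at hx1; linarith
        exact xS_ne_mid n l hn r h1 (by exact_mod_cast this)
      · have : r = n := by omega
        subst this
        have hy := congrArg Prod.snd hpr0
        simp only at hy
        rw [hup, hv] at hy
        push_cast at hy
        linarith
  rw [h] at hmem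
  obtain ⟨hXB', hor⟩ := hmem
  rcases hor with ⟨r, hr1, hr2, hptr, _, hne2, _, _⟩ | ⟨_, hsp⟩
  · exfalso
    apply hne2
    unfold iotaB
    rw [if_pos rfl]
  · simp only [Bool.false_eq_true, if_false] at hsp
    obtain ⟨hin, -⟩ := hsp
    rw [mem_iff_pt] at hin
    obtain ⟨r, hr, hpr'⟩ := hin
    rcases Nat.lt_or_ge r n with h1 | h1
    · exfalso
      have hx1 := congrArg Prod.fst hpr'
      rw [hX' r (by omega)] at hx1
      simp only at hx1
      have : (xS n l r : ℝ) = ((2*(n:ℤ) - 1 : ℤ) : ℝ) := by push_cast; push_cast at hx1; linarith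
      exact xS_ne_mid n l hn r h1 (by exact_mod_cast this)
    · have : r = n := by omega
      subst this
      have hy := congrArg Prod.snd hpr'
      simp only at hy
      rw [hy, hup, hv]
      push_cast; ring

lemma stmtBspinAux {n : ℕ} {ε : ℝ} {l : ℤ} (hn : 2 ≤ n) (hε : 0 < ε) (hl : l % 2 = 1)
    {p p' : List (ℝ × ℝ)} (hp : p ∈ pathsBspin n ε l) (hp' : p' ∈ pathsBspin n ε l)
    (h : Cp (.B n ε) p false = Cp (.B n ε) p' false)
    (r : ℕ) (hr1 : 1 ≤ r) (hr2 : r ≤ n-1)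
    (hmin : ∀ u, u < r → (pt p u).2 = (pt p' u).2)
    (hup : (pt p r).2 = (pt p (r-1)).2 + 2)
    (hdn : (pt p' r).2 = (pt p' (r-1)).2 - 2) : False := by
  set f : ℕ → ℝ := fun u => (pt p u).2 with hfd
  set g : ℕ → ℝ := fun u => (pt p' u).2 with hgd
  have hstf : ∀ u, 0 ≤ u → u < n-1 → f (u+1) = f u + 2 ∨ f (u+1) = f u - 2 := by
    intro u _ hu
    rcases hp.2.2.2.2.1 u (by omega) with h1 | h1
    · left; rw [hfd]; simp only; linarith
    · right; rw [hfd]; simp only; linarith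
  have hstg : ∀ u, 0 ≤ u → u < n-1 → g (u+1) = g u + 2 ∨ g (u+1) = g u - 2 := by
    intro u _ hu
    rcases hp'.2.2.2.2.1 u (by omega) with h1 | h1
    · left; rw [hgd]; simp only; linarith
    · right; rw [hgd]; simp only; linarith
  have hLf : ∀ t, 0 < t → t < n-1 → f (t-1) < f t → f (t+1) < f t → g t = f t := by
    intro t h1 h2 h3 h4
    exact transferLS hn hε hl hp hp' h t h1 (by omega) h3 h4
  obtain ⟨hstep, m, hm, hgap⟩ := stairs 2 two_pos f g 0 (n-1) r (by omega) hstf hstg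
    (fun u _ hu => hmin u hu) hup hdn hLf (n-1) hr2 (le_refl _)
  have hmR : (1:ℝ) ≤ (m:ℝ) := by exact_mod_cast hm
  rcases hp.2.2.2.2.2 with hla | hla
  · -- p's last step up
    have hSS := transferSS hn hε hl hp hp' h (by linarith)
    rcases hp'.2.2.2.2.2 with hla' | hla'
    · -- p' last step up
      have : g (n-1) = f (n-1) := by
        have h1 : (pt p' n).2 = (pt p n).2 := hSS
        have h2 : (pt p n).2 = f (n-1) + 1 + ε := by rw [hfd]; simp only; linarith
        rw [hgd]; simp only; rw [hfd]; simp only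
        have h3 : (pt p' n).2 - (pt p' (n-1)).2 = 1 + ε := hla'
        linarith
      nlinarith
    · have : g (n-1) = f (n-1) + 2 + 2*ε := by
        have h3 : (pt p' n).2 - (pt p' (n-1)).2 = -(1+ε) := hla'
        have h2 : (pt p n).2 = f (n-1) + 1 + ε := by rw [hfd]; simp only; linarith
        rw [hgd]; simp only
        have := hSS
        linarith
      nlinarith
  · -- p's last step down: local max at n-1
    have h4 : f ((n-1)+1) < f (n-1) := by
      rw [show n - 1 + 1 = n by omega]
      have : (pt p n).2 - (pt p (n-1)).2 = -(1+ε) := hla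
      rw [hfd]; simp only; linarith
    have h3 : f (n-1-1) < f (n-1) := by linarith [hstep]
    have := transferLS hn hε hl hp hp' h (n-1) (by omega) (by omega) h3 h4
    nlinarith

lemma stmtBspin {n : ℕ} {ε : ℝ} {l : ℤ} (hn : 2 ≤ n) (hε : 0 < ε) (hl : l % 2 = 1)
    {p p' : List (ℝ × ℝ)} (hp : p ∈ pathsBspin n ε l) (hp' : p' ∈ pathsBspin n ε l)
    (h : Cp (.B n ε) p false = Cp (.B n ε) p' false) : p = p' := by
  classical
  set f : ℕ → ℝ := fun u => (pt p u).2 with hfd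
  set g : ℕ → ℝ := fun u => (pt p' u).2 with hgd
  by_contra hne
  have hX := spinX hl hp
  have hX' := spinX hl hp'
  have hlp : p.length = n + 1 := hp.1
  have hlp' : p'.length = n + 1 := hp'.1
  have hdiff : ∃ u, f u ≠ g u := by
    by_contra hall
    push_neg at hall
    apply hne
    apply list_eq_of_pt p p' (by rw [hlp, hlp'])
    intro u hu
    refine Prod.ext ?_ (hall u)
    rw [hX u (by omega), hX' u (by omega)]
  have hrne : f (Nat.find hdiff) ≠ g (Nat.find hdiff) := Nat.find_spec hdiff
  set r := Nat.find hdiff with hrd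
  have hrmin : ∀ u, u < r → f u = g u := by
    intro u hu
    by_contra hc
    have h2 : r ≤ u := by rw [hrd]; exact Nat.find_le hc
    omega
  have hr0 : 0 < r := by
    rcases Nat.eq_zero_or_pos r with h0r | h0r
    · exfalso; apply hrne; rw [h0r]
      show (pt p 0).2 = (pt p' 0).2
      rw [hp.2.2.2.1, hp'.2.2.2.1]
    · exact h0r
  have hrn : r ≤ n := by
    by_contra hc
    push_neg at hc
    apply hrne
    show (pt p r).2 = (pt p' r).2
    rw [pt, pt, List.getD_eq_getElem?_getD, List.getD_eq_getElem?_getD,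
      List.getElem?_eq_none (by omega : p.length ≤ r),
      List.getElem?_eq_none (by omega : p'.length ≤ r)]
  have hfr1 := hrmin (r-1) (by omega)
  rcases Nat.lt_or_ge r n with hrln | hrln
  · -- r ≤ n - 1
    have hsf := hp.2.2.2.2.1 (r-1) (by omega)
    have hsg := hp'.2.2.2.2.1 (r-1) (by omega)
    rw [show r - 1 + 1 = r by omega] at hsf hsg
    rcases hsf with h1 | h1 <;> rcases hsg with h2 | h2
    · exact hrne (by show (pt p r).2 = (pt p' r).2; rw [hfd, hgd] at hfr1; simp only at hfr1; linarith)
    · exact stmtBspinAux hn hε hl hp hp' h r hr0 (by omega) hrmin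
        (by linarith) (by linarith)
    · exact stmtBspinAux hn hε hl hp' hp h.symm r hr0 (by omega)
        (fun u hu => (hrmin u hu).symm)
        (by linarith) (by linarith)
    · exact hrne (by show (pt p r).2 = (pt p' r).2; rw [hfd, hgd] at hfr1; simp only at hfr1; linarith)
  · -- r = n
    have hreq : r = n := by omega
    subst hreq
    rw [hfd, hgd] at hfr1; simp only at hfr1
    rcases hp.2.2.2.2.2 with h1 | h1 <;> rcases hp'.2.2.2.2.2 with h2 | h2
    · exact hrne (by show (pt p r).2 = (pt p' r).2; linarith)
    · have := transferSS hn hε hl hp hp' h (by linarith)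
      exact hrne this.symm
    · have := transferSS hn hε hl hp' hp h.symm (by linarith)
      exact hrne this
    · exact hrne (by show (pt p r).2 = (pt p' r).2; linarith)

/-- x-coordinates of the points of a path of `𝒫_{i,k}`, `i < N`. -/
def xF (n : ℕ) (l : ℤ) (u : ℕ) : ℤ :=
  if u ≤ n-1 then (if l % 4 = 3 then 2*u else 4*n-2-2*u)
  else if u ≤ n+1 then 2*n-1
  else (if l % 4 = 3 then 2*u-4 else 4*n+2-2*u)

lemma xF_inj (n : ℕ) (l : ℤ) (hn : 2 ≤ n) (r t : ℕ) (hr : r < 2*n+2) (ht : t < 2*n+2)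
    (he : xF n l r = xF n l t) (hne : xF n l t ≠ 2*(n:ℤ)-1) : r = t := by
  unfold xF at he hne
  split_ifs at he hne <;> omega

lemma xF_mid (n : ℕ) (l : ℤ) (hn : 2 ≤ n) (u : ℕ) (hu : u < 2*n+2)
    (he : xF n l u = 2*(n:ℤ)-1) : u = n ∨ u = n+1 := by
  unfold xF at he
  split_ifs at he <;> omega

lemma xF_notmid (n : ℕ) (l : ℤ) (hn : 2 ≤ n) (t : ℕ) (h1 : 1 ≤ t) (h2 : t ≤ 2*n)
    (h3 : t ≠ n) (h4 : t ≠ n+1) :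
    xF n l t ≠ 0 ∧ xF n l t ≠ 2*(n:ℤ)-1 ∧ xF n l t ≠ 4*(n:ℤ)-2 := by
  unfold xF
  split_ifs <;> refine ⟨by omega, by omega, by omega⟩

lemma ptP_a {n : ℕ} (a b : List (ℝ × ℝ)) (ha : a.length = n+1) (u : ℕ) (hu : u ≤ n) :
    pt (a ++ b.reverse) u = pt a u :=
  pt_append_left _ _ _ (by omega)

lemma ptP_b {n : ℕ} (a b : List (ℝ × ℝ)) (ha : a.length = n+1) (hb : b.length = n+1)
    (u : ℕ) (h1 : n+1 ≤ u) (h2 : u ≤ 2*n+1) :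
    pt (a ++ b.reverse) u = pt b (2*n+1-u) := by
  rw [pt_append_right _ _ _ (by omega) (by simp only [List.length_reverse]; omega)]
  rw [pt_reverse _ _ (by omega)]
  congr 1
  omega

lemma xF_spec {n : ℕ} {ε : ℝ} {l₁ l₂ : ℤ} (hn : 2 ≤ n) (hl1 : l₁ % 2 = 1)
    (hl21 : (l₂ - l₁) % 4 = 2) {a b : List (ℝ × ℝ)}
    (ha : a ∈ pathsBspin n ε l₁) (hb : b ∈ pathsBspin n ε l₂) :
    ∀ u, u < 2*n+2 → (pt (a ++ b.reverse) u).1 = ((xF n l₁ u : ℤ) : ℝ) := by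
  intro u hu
  have hla : a.length = n + 1 := ha.1
  have hlb : b.length = n + 1 := hb.1
  rcases Nat.lt_or_ge u (n+1) with h1 | h1
  · rw [ptP_a a b hla u (by omega)]
    rw [spinX hl1 ha u (by omega)]
    have : xS n l₁ u = xF n l₁ u := by
      unfold xS xF
      split_ifs <;> omega
    rw [this]
  · rw [ptP_b a b hla hlb u (by omega) (by omega)]
    have hl2 : l₂ % 2 = 1 := by omega
    rw [spinX hl2 hb (2*n+1-u) (by omega)]
    have : xS n l₂ (2*n+1-u) = xF n l₁ u := by
      unfold xS xF
      by_cases hc : l₁ % 4 = 3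
      · have hc2 : ¬ l₂ % 4 = 3 := by omega
        split_ifs <;> omega
      · have hc2 : l₂ % 4 = 3 := by omega
        split_ifs <;> omega
    rw [this]

lemma two_eps_ne_int {ε : ℝ} (hε : 0 < ε) (hε' : ε < 1/2) (w : ℤ) : (w:ℝ) ≠ 2*ε := by
  intro hw
  rcases le_or_gt w 0 with h | h
  · have : (w:ℝ) ≤ 0 := by exact_mod_cast h
    linarith
  · have : (1:ℝ) ≤ (w:ℝ) := by exact_mod_cast h
    linarith

lemma transferL {n : ℕ} {ε : ℝ} {l₁ l₂ : ℤ} (hn : 2 ≤ n) (hε : 0 < ε)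
    (hl1 : l₁ % 2 = 1) (hl21 : (l₂ - l₁) % 4 = 2)
    {a b a' b' : List (ℝ × ℝ)}
    (ha : a ∈ pathsBspin n ε l₁) (hb : b ∈ pathsBspin n ε l₂)
    (ha' : a' ∈ pathsBspin n ε l₁) (hb' : b' ∈ pathsBspin n ε l₂)
    (h : Cp (.B n ε) (a ++ b.reverse) false = Cp (.B n ε) (a' ++ b'.reverse) false)
    (t : ℕ) (ht1 : 1 ≤ t) (ht2 : t ≤ n-1)
    (hlo : (pt (a++b.reverse) (t-1)).2 < (pt (a++b.reverse) t).2)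
    (hhi : (pt (a++b.reverse) (t+1)).2 < (pt (a++b.reverse) t).2) :
    (pt (a'++b'.reverse) t).2 = (pt (a++b.reverse) t).2 := by
  obtain ⟨v, hv, hm⟩ := spinVal hl1 ha t (by omega)
  have hla : a.length = n + 1 := ha.1
  have hlb : b.length = n + 1 := hb.1
  have hla' : a'.length = n + 1 := ha'.1
  have hlb' : b'.length = n + 1 := hb'.1
  have hlen : (a ++ b.reverse).length = 2*n+2 := by
    simp only [List.length_append, List.length_reverse]; omega
  have hlen' : (a' ++ b'.reverse).length = 2*n+2 := by
    simp only [List.length_append, List.length_reverse]; omega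
  have hX := xF_spec hn hl1 hl21 ha hb
  have hX' := xF_spec hn hl1 hl21 ha' hb'
  have hpv : (pt (a++b.reverse) t).2 = (v:ℝ) := by
    rw [ptP_a a b hla t (by omega)]; exact hv
  have hxv : iotaB n ((t : ℕ), v) = (xF n l₁ t, v) := by
    unfold iotaB xF
    by_cases hl4 : l₁ % 4 = 3
    · rw [if_neg (by omega : ¬ (t:ℕ) = n),
        if_pos (by simp only; omega : (2*(n:ℤ) + ((t:ℕ),v).2 - 2*((t:ℕ),v).1) % 4 = 2),
        if_pos (by omega : t ≤ n-1), if_pos hl4]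
    · rw [if_neg (by omega : ¬ (t:ℕ) = n),
        if_neg (by simp only; omega : ¬ (2*(n:ℤ) + ((t:ℕ),v).2 - 2*((t:ℕ),v).1) % 4 = 2),
        if_pos (by omega : t ≤ n-1), if_neg hl4]
  obtain ⟨hx0, hx1, hx2⟩ := xF_notmid n l₁ hn t (by omega) (by omega) (by omega) (by omega)
  have hmem : ((t : ℕ), v) ∈ Cp (.B n ε) (a ++ b.reverse) false := by
    refine ⟨Or.inr ⟨ht1, by omega, by omega⟩, Or.inl ⟨t, ht1, by omega, ?_, ?_, ?_, ?_, ?_⟩⟩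
    · rw [hxv]
      refine Prod.ext ?_ ?_
      · rw [hX t (by omega)]
      · exact hpv
    · rw [hxv]; exact hx0
    · rw [hxv]; exact hx1
    · rw [hxv]; exact hx2
    · simp only [Bool.false_eq_true, if_false]
      exact ⟨hlo, hhi⟩
  rw [h] at hmem
  obtain ⟨hXB', hor⟩ := hmem
  rcases hor with ⟨r, hr1, hr2, hptr, _, _, _, _⟩ | ⟨hjn, _⟩
  · rw [hlen'] at hr2
    have hx1' : (pt (a'++b'.reverse) r).1 = ((xF n l₁ t : ℤ) : ℝ) := by rw [hptr, hxv]
    have he : xF n l₁ r = xF n l₁ t := by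
      have := hX' r (by omega)
      rw [this] at hx1'
      exact_mod_cast hx1'
    have hrt : r = t := xF_inj n l₁ hn r t (by omega) (by omega) he hx1
    subst hrt
    rw [hpv]
    have := congrArg Prod.snd hptr
    rw [hxv] at this
    exact this
  · exact absurd hjn (by omega)

lemma transferR {n : ℕ} {ε : ℝ} {l₁ l₂ : ℤ} (hn : 2 ≤ n) (hε : 0 < ε)
    (hl1 : l₁ % 2 = 1) (hl21 : (l₂ - l₁) % 4 = 2)
    {a b a' b' : List (ℝ × ℝ)}
    (ha : a ∈ pathsBspin n ε l₁) (hb : b ∈ pathsBspin n ε l₂)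
    (ha' : a' ∈ pathsBspin n ε l₁) (hb' : b' ∈ pathsBspin n ε l₂)
    (h : Cp (.B n ε) (a ++ b.reverse) false = Cp (.B n ε) (a' ++ b'.reverse) false)
    (t : ℕ) (ht1 : n+2 ≤ t) (ht2 : t ≤ 2*n)
    (hlo : (pt (a++b.reverse) (t-1)).2 < (pt (a++b.reverse) t).2)
    (hhi : (pt (a++b.reverse) (t+1)).2 < (pt (a++b.reverse) t).2) :
    (pt (a'++b'.reverse) t).2 = (pt (a++b.reverse) t).2 := by
  have hl2 : l₂ % 2 = 1 := by omega
  obtain ⟨v, hv, hm⟩ := spinVal hl2 hb (2*n+1-t) (by omega)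
  have hla : a.length = n + 1 := ha.1
  have hlb : b.length = n + 1 := hb.1
  have hla' : a'.length = n + 1 := ha'.1
  have hlb' : b'.length = n + 1 := hb'.1
  have hlen : (a ++ b.reverse).length = 2*n+2 := by
    simp only [List.length_append, List.length_reverse]; omega
  have hlen' : (a' ++ b'.reverse).length = 2*n+2 := by
    simp only [List.length_append, List.length_reverse]; omega
  have hX := xF_spec hn hl1 hl21 ha hb
  have hX' := xF_spec hn hl1 hl21 ha' hb'
  have hpv : (pt (a++b.reverse) t).2 = (v:ℝ) := by
    rw [ptP_b a b hla hlb t (by omega) (by omega)]; exact hv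
  have hxv : iotaB n ((2*n+1-t : ℕ), v) = (xF n l₁ t, v) := by
    unfold iotaB xF
    by_cases hl4 : l₁ % 4 = 3
    · rw [if_neg (by omega : ¬ (2*n+1-t:ℕ) = n),
        if_neg (by simp only; omega : ¬ (2*(n:ℤ) + ((2*n+1-t:ℕ),v).2 - 2*((2*n+1-t:ℕ),v).1) % 4 = 2),
        if_neg (by omega : ¬ t ≤ n-1), if_neg (by omega : ¬ t ≤ n+1), if_pos hl4]
      refine Prod.ext ?_ rfl
      simp only
      omega
    · rw [if_neg (by omega : ¬ (2*n+1-t:ℕ) = n),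
        if_pos (by simp only; omega : (2*(n:ℤ) + ((2*n+1-t:ℕ),v).2 - 2*((2*n+1-t:ℕ),v).1) % 4 = 2),
        if_neg (by omega : ¬ t ≤ n-1), if_neg (by omega : ¬ t ≤ n+1), if_neg hl4]
      refine Prod.ext ?_ rfl
      simp only
      omega
  obtain ⟨hx0, hx1, hx2⟩ := xF_notmid n l₁ hn t (by omega) (by omega) (by omega) (by omega)
  have hmem : ((2*n+1-t : ℕ), v) ∈ Cp (.B n ε) (a ++ b.reverse) false := by
    refine ⟨Or.inr ⟨by omega, by omega, by omega⟩, Or.inl ⟨t, by omega, by omega, ?_, ?_, ?_, ?_, ?_⟩⟩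
    · rw [hxv]
      refine Prod.ext ?_ ?_
      · rw [hX t (by omega)]
      · exact hpv
    · rw [hxv]; exact hx0
    · rw [hxv]; exact hx1
    · rw [hxv]; exact hx2
    · simp only [Bool.false_eq_true, if_false]
      exact ⟨hlo, hhi⟩
  rw [h] at hmem
  obtain ⟨hXB', hor⟩ := hmem
  rcases hor with ⟨r, hr1, hr2, hptr, _, _, _, _⟩ | ⟨hjn, _⟩
  · rw [hlen'] at hr2
    have hx1' : (pt (a'++b'.reverse) r).1 = ((xF n l₁ t : ℤ) : ℝ) := by rw [hptr, hxv]
    have he : xF n l₁ r = xF n l₁ t := by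
      have := hX' r (by omega)
      rw [this] at hx1'
      exact_mod_cast hx1'
    have hrt : r = t := xF_inj n l₁ hn r t (by omega) (by omega) he hx1
    subst hrt
    rw [hpv]
    have := congrArg Prod.snd hptr
    rw [hxv] at this
    exact this
  · exact absurd hjn (by omega)

lemma transferS {n : ℕ} {ε : ℝ} {l₁ l₂ : ℤ} (hn : 2 ≤ n) (hε : 0 < ε)
    (hl1 : l₁ % 2 = 1) (hl21 : (l₂ - l₁) % 4 = 2)
    {a b a' b' : List (ℝ × ℝ)}
    (ha : a ∈ pathsBspin n ε l₁) (hb : b ∈ pathsBspin n ε l₂)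
    (ha' : a' ∈ pathsBspin n ε l₁) (hb' : b' ∈ pathsBspin n ε l₂)
    (h : Cp (.B n ε) (a ++ b.reverse) false = Cp (.B n ε) (a' ++ b'.reverse) false)
    (v : ℤ) (hvodd : v % 2 = 1)
    (hin : (pt (a++b.reverse) n).2 = v + ε ∨ (pt (a++b.reverse) (n+1)).2 = v + ε)
    (hna : (pt (a++b.reverse) n).2 ≠ v - ε)
    (hnb : (pt (a++b.reverse) (n+1)).2 ≠ v - ε) :
    (pt (a'++b'.reverse) n).2 = v + ε ∨ (pt (a'++b'.reverse) (n+1)).2 = v + ε := by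
  have hla : a.length = n + 1 := ha.1
  have hlb : b.length = n + 1 := hb.1
  have hla' : a'.length = n + 1 := ha'.1
  have hlb' : b'.length = n + 1 := hb'.1
  have hlen : (a ++ b.reverse).length = 2*n+2 := by
    simp only [List.length_append, List.length_reverse]; omega
  have hlen' : (a' ++ b'.reverse).length = 2*n+2 := by
    simp only [List.length_append, List.length_reverse]; omega
  have hX := xF_spec hn hl1 hl21 ha hb
  have hX' := xF_spec hn hl1 hl21 ha' hb'
  have hXmid : ∀ u, u = n ∨ u = n+1 → (pt (a++b.reverse) u).1 = 2*(n:ℝ) - 1 := by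
    intro u hu
    have h2 : xF n l₁ u = 2*(n:ℤ)-1 := by unfold xF; split_ifs <;> omega
    rw [hX u (by omega), h2]
    push_cast; ring
  have hXmid' : ∀ u, u = n ∨ u = n+1 → (pt (a'++b'.reverse) u).1 = 2*(n:ℝ) - 1 := by
    intro u hu
    have h2 : xF n l₁ u = 2*(n:ℤ)-1 := by unfold xF; split_ifs <;> omega
    rw [hX' u (by omega), h2]
    push_cast; ring
  have hmem : ((n : ℕ), v) ∈ Cp (.B n ε) (a ++ b.reverse) false := by
    refine ⟨Or.inl ⟨rfl, hvodd⟩, Or.inr ⟨rfl, ?_⟩⟩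
    simp only [Bool.false_eq_true, if_false]
    constructor
    · rw [mem_iff_pt]
      rcases hin with h1 | h1
      · exact ⟨n, by omega, Prod.ext (hXmid n (Or.inl rfl)) h1⟩
      · exact ⟨n+1, by omega, Prod.ext (hXmid (n+1) (Or.inr rfl)) h1⟩
    · rw [mem_iff_pt]
      rintro ⟨r, hr, hpr⟩
      rw [hlen] at hr
      have hx1 := congrArg Prod.fst hpr
      have h2 : xF n l₁ r = 2*(n:ℤ)-1 := by
        have := hX r hr
        rw [this] at hx1
        simp only at hx1
        have : ((xF n l₁ r : ℤ) : ℝ) = ((2*(n:ℤ)-1 : ℤ) : ℝ) := by push_cast; push_cast at hx1; linarith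
        exact_mod_cast this
      rcases xF_mid n l₁ hn r hr h2 with h3 | h3 <;> subst h3
      · exact hna (congrArg Prod.snd hpr)
      · exact hnb (congrArg Prod.snd hpr)
  rw [h] at hmem
  obtain ⟨hXB', hor⟩ := hmem
  rcases hor with ⟨r, hr1, hr2, hptr, _, hne2, _, _⟩ | ⟨_, hsp⟩
  · exfalso
    apply hne2
    unfold iotaB
    rw [if_pos rfl]
  · simp only [Bool.false_eq_true, if_false] at hsp
    obtain ⟨hin', -⟩ := hsp
    rw [mem_iff_pt] at hin'
    obtain ⟨r, hr, hpr'⟩ := hin'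
    rw [hlen'] at hr
    have hx1 := congrArg Prod.fst hpr'
    have h2 : xF n l₁ r = 2*(n:ℤ)-1 := by
      have := hX' r hr
      rw [this] at hx1
      simp only at hx1
      have : ((xF n l₁ r : ℤ) : ℝ) = ((2*(n:ℤ)-1 : ℤ) : ℝ) := by push_cast; push_cast at hx1; linarith
      exact_mod_cast this
    rcases xF_mid n l₁ hn r hr h2 with h3 | h3 <;> subst h3
    · exact Or.inl (congrArg Prod.snd hpr')
    · exact Or.inr (congrArg Prod.snd hpr')

lemma rightStairs {n : ℕ} {ε : ℝ} {l₁ l₂ : ℤ} (hn : 2 ≤ n) (hε : 0 < ε)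
    (hl1 : l₁ % 2 = 1) (hl21 : (l₂ - l₁) % 4 = 2)
    {a b a' b' : List (ℝ × ℝ)}
    (ha : a ∈ pathsBspin n ε l₁) (hb : b ∈ pathsBspin n ε l₂)
    (ha' : a' ∈ pathsBspin n ε l₁) (hb' : b' ∈ pathsBspin n ε l₂)
    (h : Cp (.B n ε) (a ++ b.reverse) false = Cp (.B n ε) (a' ++ b'.reverse) false)
    (hmid : (pt b (n-1)).2 = (pt b' (n-1)).2 ∨
      ((pt b n).2 < (pt b (n-1)).2 ∧ (pt b' n).2 < (pt b' (n-1)).2))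
    (hne : ∃ u, u ≤ n-1 ∧ (pt b u).2 ≠ (pt b' u).2) : False := by
  classical
  have hla : a.length = n + 1 := ha.1
  have hlb : b.length = n + 1 := hb.1
  have hla' : a'.length = n + 1 := ha'.1
  have hlb' : b'.length = n + 1 := hb'.1
  set F : ℕ → ℝ := fun u => (pt b u).2 with hFd
  set G : ℕ → ℝ := fun u => (pt b' u).2 with hGd
  have hdiff : ∃ u, F u ≠ G u := by
    obtain ⟨u, _, hu⟩ := hne
    exact ⟨u, hu⟩
  set r := Nat.find hdiff with hrd
  have hrne : F r ≠ G r := Nat.find_spec hdiff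
  have hrmin : ∀ u, u < r → F u = G u := by
    intro u hu
    by_contra hc
    have h2 : r ≤ u := by rw [hrd]; exact Nat.find_le hc
    omega
  have hrn : r ≤ n - 1 := by
    obtain ⟨u, hu1, hu2⟩ := hne
    have : r ≤ u := by rw [hrd]; exact Nat.find_le hu2
    omega
  have hr0 : 0 < r := by
    rcases Nat.eq_zero_or_pos r with h0 | h0
    · exfalso; apply hrne; rw [h0]
      show (pt b 0).2 = (pt b' 0).2
      rw [hb.2.2.2.1, hb'.2.2.2.1]
    · exact h0
  have hstF : ∀ u, 0 ≤ u → u < n-1 → F (u+1) = F u + 2 ∨ F (u+1) = F u - 2 := by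
    intro u _ hu
    rcases hb.2.2.2.2.1 u (by omega) with h1 | h1
    · left; rw [hFd]; simp only; linarith
    · right; rw [hFd]; simp only; linarith
  have hstG : ∀ u, 0 ≤ u → u < n-1 → G (u+1) = G u + 2 ∨ G (u+1) = G u - 2 := by
    intro u _ hu
    rcases hb'.2.2.2.2.1 u (by omega) with h1 | h1
    · left; rw [hGd]; simp only; linarith
    · right; rw [hGd]; simp only; linarith
  -- transfer of local maxima in b-coordinates, direction p → p'
  have hTf : ∀ t, 0 < t → t ≤ n-1 → F (t-1) < F t → F (t+1) < F t → G t = F t := by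
    intro t h1 h2 h3 h4
    have e0 : pt (a++b.reverse) (2*n+1-t) = pt b t := by
      rw [ptP_b a b hla hlb _ (by omega) (by omega)]
      congr 1; omega
    have e0' : pt (a'++b'.reverse) (2*n+1-t) = pt b' t := by
      rw [ptP_b a' b' hla' hlb' _ (by omega) (by omega)]
      congr 1; omega
    have e1 : pt (a++b.reverse) (2*n+1-t-1) = pt b (t+1) := by
      rw [show 2*n+1-t-1 = 2*n-t by omega]
      rw [ptP_b a b hla hlb _ (by omega) (by omega)]
      congr 1; omega
    have e2 : pt (a++b.reverse) (2*n+1-t+1) = pt b (t-1) := by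
      rw [show 2*n+1-t+1 = 2*n+2-t by omega]
      rw [ptP_b a b hla hlb _ (by omega) (by omega)]
      congr 1; omega
    have := transferR hn hε hl1 hl21 ha hb ha' hb' h (2*n+1-t) (by omega) (by omega)
      (by rw [e1, e0]; exact h4) (by rw [e2, e0]; exact h3)
    rw [e0, e0'] at this
    exact this
  -- transfer of local maxima in b-coordinates, direction p' → p
  have hTg : ∀ t, 0 < t → t ≤ n-1 → G (t-1) < G t → G (t+1) < G t → F t = G t := by
    intro t h1 h2 h3 h4
    have e0 : pt (a++b.reverse) (2*n+1-t) = pt b t := by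
      rw [ptP_b a b hla hlb _ (by omega) (by omega)]
      congr 1; omega
    have e0' : pt (a'++b'.reverse) (2*n+1-t) = pt b' t := by
      rw [ptP_b a' b' hla' hlb' _ (by omega) (by omega)]
      congr 1; omega
    have e1 : pt (a'++b'.reverse) (2*n+1-t-1) = pt b' (t+1) := by
      rw [show 2*n+1-t-1 = 2*n-t by omega]
      rw [ptP_b a' b' hla' hlb' _ (by omega) (by omega)]
      congr 1; omega
    have e2 : pt (a'++b'.reverse) (2*n+1-t+1) = pt b' (t-1) := by
      rw [show 2*n+1-t+1 = 2*n+2-t by omega]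
      rw [ptP_b a' b' hla' hlb' _ (by omega) (by omega)]
      congr 1; omega
    have := transferR hn hε hl1 hl21 ha' hb' ha hb h.symm (2*n+1-t) (by omega) (by omega)
      (by rw [e1, e0']; exact h4) (by rw [e2, e0']; exact h3)
    rw [e0, e0'] at this
    exact this
  have hstep1 := hb.2.2.2.2.1 (r-1) (by omega)
  have hstep1' := hb'.2.2.2.2.1 (r-1) (by omega)
  rw [show r - 1 + 1 = r by omega] at hstep1 hstep1'
  have hFr1 : F (r-1) = G (r-1) := hrmin (r-1) (by omega)
  rcases hstep1 with hs1 | hs1 <;> rcases hstep1' with hs2 | hs2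
  · exact hrne (by show (pt b r).2 = (pt b' r).2; rw [hFd, hGd] at hFr1; simp only at hFr1; linarith)
  · -- F up, G down
    obtain ⟨hstep, m, hm, hgap⟩ := stairs 2 two_pos F G 0 (n-1) r hr0 hstF hstG
      (fun u _ hu => hrmin u hu)
      (by show (pt b r).2 = (pt b (r-1)).2 + 2; linarith)
      (by show (pt b' r).2 = (pt b' (r-1)).2 - 2; linarith)
      (fun t h1 h2 h3 h4 => hTf t h1 (by omega) h3 h4) (n-1) hrn (le_refl _)
    have hmR : (1:ℝ) ≤ (m:ℝ) := by exact_mod_cast hm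
    rcases hmid with he | ⟨hσf, hσg⟩
    · have he2 : F (n-1) = G (n-1) := he
      nlinarith
    · have := hTf (n-1) (by omega) (le_refl _) (by linarith)
        (by rw [show n-1+1 = n by omega]; exact hσf)
      nlinarith
  · -- G up, F down
    obtain ⟨hstep, m, hm, hgap⟩ := stairs 2 two_pos G F 0 (n-1) r hr0 hstG hstF
      (fun u _ hu => (hrmin u hu).symm)
      (by show (pt b' r).2 = (pt b' (r-1)).2 + 2; linarith)
      (by show (pt b r).2 = (pt b (r-1)).2 - 2; linarith)
      (fun t h1 h2 h3 h4 => hTg t h1 (by omega) h3 h4) (n-1) hrn (le_refl _)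
    have hmR : (1:ℝ) ≤ (m:ℝ) := by exact_mod_cast hm
    rcases hmid with he | ⟨hσf, hσg⟩
    · have he2 : F (n-1) = G (n-1) := he
      nlinarith
    · have := hTg (n-1) (by omega) (le_refl _) (by linarith)
        (by rw [show n-1+1 = n by omega]; exact hσg)
      nlinarith
  · exact hrne (by show (pt b r).2 = (pt b' r).2; rw [hFd, hGd] at hFr1; simp only at hFr1; linarith)

lemma b_down {n : ℕ} {ε : ℝ} {l₂ : ℤ} (hn : 2 ≤ n) (hε : 0 < ε) (hε2 : ε < 1/2)
    (hl2 : l₂ % 2 = 1) {b : List (ℝ × ℝ)} (hb : b ∈ pathsBspin n ε l₂) (v : ℤ)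
    (hx : (pt b n).2 = (v:ℝ) - ε) : (pt b (n-1)).2 = (v:ℝ) + 1 := by
  obtain ⟨vb, hvb, _⟩ := spinVal hl2 hb (n-1) (by omega)
  rcases hb.2.2.2.2.2 with hbl | hbl
  · exfalso
    have h2 : ((v - 1 - vb : ℤ):ℝ) = 2*ε := by push_cast; linarith
    exact two_eps_ne_int hε hε2 _ h2
  · linarith

lemma midBAux {n : ℕ} {ε : ℝ} {l₁ l₂ : ℤ} (hn : 2 ≤ n) (hε : 0 < ε) (hε2 : ε < 1/2)
    (hl1 : l₁ % 2 = 1) (hl21 : (l₂ - l₁) % 4 = 2)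
    {a b a' b' : List (ℝ × ℝ)}
    (ha : a ∈ pathsBspin n ε l₁) (hb : b ∈ pathsBspin n ε l₂)
    (ha' : a' ∈ pathsBspin n ε l₁) (hb' : b' ∈ pathsBspin n ε l₂)
    (h : Cp (.B n ε) (a ++ b.reverse) false = Cp (.B n ε) (a' ++ b'.reverse) false)
    (hga : 0 < (pt a n).2 - (pt b n).2)
    (hminA : (pt a n).2 = (pt a' n).2)
    (hneB : (pt b n).2 ≠ (pt b' n).2)
    (hup : (pt b n).2 = (pt b (n-1)).2 + 1 + ε) : False := by
  have hla : a.length = n + 1 := ha.1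
  have hlb : b.length = n + 1 := hb.1
  have hla' : a'.length = n + 1 := ha'.1
  have hlb' : b'.length = n + 1 := hb'.1
  have hl2 : l₂ % 2 = 1 := by omega
  have eA : pt (a++b.reverse) n = pt a n := ptP_a a b hla n (le_refl n)
  have eB : pt (a++b.reverse) (n+1) = pt b n := by
    rw [ptP_b a b hla hlb (n+1) (by omega) (by omega)]; congr 1; omega
  have eA' : pt (a'++b'.reverse) n = pt a' n := ptP_a a' b' hla' n (le_refl n)
  have eB' : pt (a'++b'.reverse) (n+1) = pt b' n := by
    rw [ptP_b a' b' hla' hlb' (n+1) (by omega) (by omega)]; congr 1; omega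
  obtain ⟨vb, hvb, hmb⟩ := spinVal hl2 hb (n-1) (by omega)
  set w : ℤ := vb + 1 with hwd
  have hwR : (w:ℝ) = (vb:ℝ) + 1 := by rw [hwd]; push_cast; ring
  have hbw : (pt b n).2 = (w:ℝ) + ε := by linarith
  have := transferS hn hε hl1 hl21 ha hb ha' hb' h w (by omega)
    (Or.inr (by rw [eB]; exact hbw))
    (by rw [eA]; intro hc; linarith)
    (by rw [eB]; intro hc; linarith)
  rcases this with h1 | h1
  · rw [eA', ← hminA] at h1
    linarith
  · rw [eB'] at h1
    exact hneB (by rw [h1, hbw])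

lemma midAux {n : ℕ} {ε : ℝ} {l₁ l₂ : ℤ} (hn : 2 ≤ n) (hε : 0 < ε) (hε2 : ε < 1/2)
    (hl1 : l₁ % 2 = 1) (hl21 : (l₂ - l₁) % 4 = 2)
    {a b a' b' : List (ℝ × ℝ)}
    (ha : a ∈ pathsBspin n ε l₁) (hb : b ∈ pathsBspin n ε l₂)
    (ha' : a' ∈ pathsBspin n ε l₁) (hb' : b' ∈ pathsBspin n ε l₂)
    (h : Cp (.B n ε) (a ++ b.reverse) false = Cp (.B n ε) (a' ++ b'.reverse) false)
    (hga : 0 < (pt a n).2 - (pt b n).2)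
    (hga' : 0 < (pt a' n).2 - (pt b' n).2)
    (hmin : (pt a (n-1)).2 = (pt a' (n-1)).2)
    (hup : (pt a n).2 = (pt a (n-1)).2 + 1 + ε)
    (hdn : (pt a' n).2 = (pt a' (n-1)).2 - 1 - ε) : False := by
  have hla : a.length = n + 1 := ha.1
  have hlb : b.length = n + 1 := hb.1
  have hla' : a'.length = n + 1 := ha'.1
  have hlb' : b'.length = n + 1 := hb'.1
  have hl2 : l₂ % 2 = 1 := by omega
  have eA : pt (a++b.reverse) n = pt a n := ptP_a a b hla n (le_refl n)
  have eB : pt (a++b.reverse) (n+1) = pt b n := by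
    rw [ptP_b a b hla hlb (n+1) (by omega) (by omega)]; congr 1; omega
  have eA' : pt (a'++b'.reverse) n = pt a' n := ptP_a a' b' hla' n (le_refl n)
  have eB' : pt (a'++b'.reverse) (n+1) = pt b' n := by
    rw [ptP_b a' b' hla' hlb' (n+1) (by omega) (by omega)]; congr 1; omega
  obtain ⟨va, hva, hma⟩ := spinVal hl1 ha (n-1) (by omega)
  set v : ℤ := va + 1 with hvd
  have hvR : (v:ℝ) = (va:ℝ) + 1 := by rw [hvd]; push_cast; ring
  have hav : (pt a n).2 = (v:ℝ) + ε := by linarith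
  have hav' : (pt a' n).2 = (v:ℝ) - 2 - ε := by linarith [hmin, hva, hdn]
  by_cases hk : (pt b n).2 = (v:ℝ) - ε
  · -- kissing
    have hbn1 : (pt b (n-1)).2 = (v:ℝ) + 1 := b_down hn hε hε2 hl2 hb v hk
    have hσf : (pt b n).2 < (pt b (n-1)).2 := by rw [hk, hbn1]; linarith
    rcases hb'.2.2.2.2.2 with hbl' | hbl'
    · -- b' last step up : spin corner of p' transfers to p
      obtain ⟨vb', hvb', hmb'⟩ := spinVal hl2 hb' (n-1) (by omega)
      set w : ℤ := vb' + 1 with hwd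
      have hwR : (w:ℝ) = (vb':ℝ) + 1 := by rw [hwd]; push_cast; ring
      have hw : (pt b' n).2 = (w:ℝ) + ε := by linarith
      have := transferS hn hε hl1 hl21 ha' hb' ha hb h.symm w (by omega)
        (Or.inr (by rw [eB']; exact hw))
        (by rw [eA']; intro hc; linarith)
        (by rw [eB']; intro hc; linarith)
      rcases this with h1 | h1
      · rw [eA, hav] at h1
        have hvw : v = w := by
          have : (v:ℝ) = (w:ℝ) := by linarith
          exact_mod_cast this
        rw [← hvw] at hw
        linarith [hga', hav']
      · rw [eB, hk] at h1
        have h2 : ((v - w : ℤ):ℝ) = 2*ε := by push_cast; linarith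
        exact two_eps_ne_int hε hε2 _ h2
    · -- b' last step down
      have hσg : (pt b' n).2 < (pt b' (n-1)).2 := by linarith
      by_cases heq : (pt b (n-1)).2 = (pt b' (n-1)).2
      · have hx : (pt b' n).2 = (v:ℝ) - ε := by
          have : (pt b' n).2 = (pt b' (n-1)).2 - 1 - ε := by linarith
          rw [← heq, hbn1] at this
          linarith
        linarith [hga', hav']
      · exact rightStairs hn hε hl1 hl21 ha hb ha' hb' h (Or.inr ⟨hσf, hσg⟩) ⟨n-1, le_refl _, heq⟩
  · -- not kissing : spin corner of p at v transfers to p'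
    have := transferS hn hε hl1 hl21 ha hb ha' hb' h v (by omega)
      (Or.inl (by rw [eA]; exact hav))
      (by rw [eA]; intro hc; rw [hav] at hc; linarith)
      (by rw [eB]; exact hk)
    rcases this with h1 | h1
    · rw [eA', hav'] at h1
      linarith
    · rw [eB'] at h1
      rw [h1] at hga'
      linarith [hav']

set_option maxHeartbeats 1000000 in
lemma leftAux {n : ℕ} {ε : ℝ} {l₁ l₂ : ℤ} (hn : 2 ≤ n) (hε : 0 < ε) (hε2 : ε < 1/2)
    (hl1 : l₁ % 2 = 1) (hl21 : (l₂ - l₁) % 4 = 2)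
    {a b a' b' : List (ℝ × ℝ)}
    (ha : a ∈ pathsBspin n ε l₁) (hb : b ∈ pathsBspin n ε l₂)
    (ha' : a' ∈ pathsBspin n ε l₁) (hb' : b' ∈ pathsBspin n ε l₂)
    (h : Cp (.B n ε) (a ++ b.reverse) false = Cp (.B n ε) (a' ++ b'.reverse) false)
    (hga : 0 < (pt a n).2 - (pt b n).2)
    (hga' : 0 < (pt a' n).2 - (pt b' n).2)
    (r : ℕ) (hr1 : 1 ≤ r) (hr2 : r ≤ n-1)
    (hmin : ∀ u, u < r → (pt a u).2 = (pt a' u).2)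
    (hup : (pt a r).2 = (pt a (r-1)).2 + 2)
    (hdn : (pt a' r).2 = (pt a' (r-1)).2 - 2) : False := by
  have hla : a.length = n + 1 := ha.1
  have hlb : b.length = n + 1 := hb.1
  have hla' : a'.length = n + 1 := ha'.1
  have hlb' : b'.length = n + 1 := hb'.1
  have hl2 : l₂ % 2 = 1 := by omega
  have eA : pt (a++b.reverse) n = pt a n := ptP_a a b hla n (le_refl n)
  have eB : pt (a++b.reverse) (n+1) = pt b n := by
    rw [ptP_b a b hla hlb (n+1) (by omega) (by omega)]; congr 1; omega
  have eA' : pt (a'++b'.reverse) n = pt a' n := ptP_a a' b' hla' n (le_refl n)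
  have eB' : pt (a'++b'.reverse) (n+1) = pt b' n := by
    rw [ptP_b a' b' hla' hlb' (n+1) (by omega) (by omega)]; congr 1; omega
  set F : ℕ → ℝ := fun u => (pt a u).2 with hFd
  set G : ℕ → ℝ := fun u => (pt a' u).2 with hGd
  have hstF : ∀ u, 0 ≤ u → u < n-1 → F (u+1) = F u + 2 ∨ F (u+1) = F u - 2 := by
    intro u _ hu
    rcases ha.2.2.2.2.1 u (by omega) with h1 | h1
    · left; show (pt a (u+1)).2 = (pt a u).2 + 2; linarith
    · right; show (pt a (u+1)).2 = (pt a u).2 - 2; linarith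
  have hstG : ∀ u, 0 ≤ u → u < n-1 → G (u+1) = G u + 2 ∨ G (u+1) = G u - 2 := by
    intro u _ hu
    rcases ha'.2.2.2.2.1 u (by omega) with h1 | h1
    · left; show (pt a' (u+1)).2 = (pt a' u).2 + 2; linarith
    · right; show (pt a' (u+1)).2 = (pt a' u).2 - 2; linarith
  have hTf : ∀ t, 0 < t → t ≤ n-1 → F (t-1) < F t → F (t+1) < F t → G t = F t := by
    intro t h1 h2 h3 h4
    have e0 : pt (a++b.reverse) t = pt a t := ptP_a a b hla t (by omega)
    have e0' : pt (a'++b'.reverse) t = pt a' t := ptP_a a' b' hla' t (by omega)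
    have e1 : pt (a++b.reverse) (t-1) = pt a (t-1) := ptP_a a b hla (t-1) (by omega)
    have e2 : pt (a++b.reverse) (t+1) = pt a (t+1) := ptP_a a b hla (t+1) (by omega)
    have := transferL hn hε hl1 hl21 ha hb ha' hb' h t h1 h2
      (by rw [e1, e0]; exact h3) (by rw [e2, e0]; exact h4)
    rw [e0, e0'] at this
    exact this
  obtain ⟨hstep, m, hm, hgap⟩ := stairs 2 two_pos F G 0 (n-1) r hr1
    hstF hstG (fun u _ hu => hmin u hu)
    (by show (pt a r).2 = (pt a (r-1)).2 + 2; linarith)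
    (by show (pt a' r).2 = (pt a' (r-1)).2 - 2; linarith)
    (fun t h1 h2 h3 h4 => hTf t h1 (by omega) h3 h4) (n-1) hr2 (le_refl _)
  have hmR : (1:ℝ) ≤ (m:ℝ) := by exact_mod_cast hm
  obtain ⟨va, hva, hma⟩ := spinVal hl1 ha (n-1) (by omega)
  have hFva : F (n-1) = (va:ℝ) := hva
  have hgapR : (pt a' (n-1)).2 = (va:ℝ) - 2*(m:ℝ)*2 := by
    have h9 : G (n-1) = F (n-1) - 2*(m:ℝ)*2 := by linarith
    rw [hFva] at h9
    exact h9
  rcases ha.2.2.2.2.2 with hal | hal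
  · -- a's last step up
    set v : ℤ := va + 1 with hvd
    have hvR : (v:ℝ) = (va:ℝ) + 1 := by rw [hvd]; push_cast; ring
    have hav : (pt a n).2 = (v:ℝ) + ε := by
      have h9 : (pt a n).2 - F (n-1) = 1 + ε := hal
      rw [hFva] at h9
      linarith
    by_cases hk : (pt b n).2 = (v:ℝ) - ε
    · -- kissing
      have hbn1 : (pt b (n-1)).2 = (v:ℝ) + 1 := b_down hn hε hε2 hl2 hb v hk
      have hσf : (pt b n).2 < (pt b (n-1)).2 := by rw [hk, hbn1]; linarith
      rcases ha'.2.2.2.2.2 with hal' | hal'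
      · -- a' last step up
        have hw : (pt a' n).2 = ((va:ℝ) - 2*(m:ℝ)*2 + 1) + ε := by
          have h9 : (pt a' n).2 - (pt a' (n-1)).2 = 1 + ε := hal'
          linarith [hgapR]
        set w : ℤ := va + 1 - 4*m with hwd
        have hwR : (w:ℝ) = (va:ℝ) - 2*(m:ℝ)*2 + 1 := by rw [hwd]; push_cast; ring
        have hw2 : (pt a' n).2 = (w:ℝ) + ε := by rw [hwR]; exact hw
        by_cases hk' : (pt b' n).2 = (w:ℝ) - ε
        · -- p' kissing too : compare right halves
          have hbn1' : (pt b' (n-1)).2 = (w:ℝ) + 1 := b_down hn hε hε2 hl2 hb' w hk'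
          have hσg : (pt b' n).2 < (pt b' (n-1)).2 := by rw [hk', hbn1']; linarith
          have hneB : (pt b (n-1)).2 ≠ (pt b' (n-1)).2 := by
            rw [hbn1, hbn1']
            intro hc
            have : (v:ℝ) = (w:ℝ) := by linarith
            have : v = w := by exact_mod_cast this
            omega
          exact rightStairs hn hε hl1 hl21 ha hb ha' hb' h (Or.inr ⟨hσf, hσg⟩)
            ⟨n-1, le_refl _, hneB⟩
        · -- p' not kissing : spin corner of p' at w transfers to p
          have := transferS hn hε hl1 hl21 ha' hb' ha hb h.symm w (by omega)
            (Or.inl (by rw [eA']; exact hw2))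
            (by rw [eA']; intro hc; rw [hw2] at hc; linarith)
            (by rw [eB']; exact hk')
          rcases this with h1 | h1
          · rw [eA, hav] at h1
            have : v = w := by
              have : (v:ℝ) = (w:ℝ) := by linarith
              exact_mod_cast this
            omega
          · rw [eB, hk] at h1
            have h2 : ((v - w : ℤ):ℝ) = 2*ε := by push_cast; linarith
            exact two_eps_ne_int hε hε2 _ h2
      · -- a' last step down
        have hav' : (pt a' n).2 = (va:ℝ) - 2*(m:ℝ)*2 - 1 - ε := by
          have h9 : (pt a' n).2 - (pt a' (n-1)).2 = -(1 + ε) := hal'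
          linarith [hgapR]
        rcases hb'.2.2.2.2.2 with hbl' | hbl'
        · -- b' last step up : spin corner of p' transfers to p
          obtain ⟨vb', hvb', hmb'⟩ := spinVal hl2 hb' (n-1) (by omega)
          set w : ℤ := vb' + 1 with hwd
          have hwR : (w:ℝ) = (vb':ℝ) + 1 := by rw [hwd]; push_cast; ring
          have hw : (pt b' n).2 = (w:ℝ) + ε := by linarith
          have := transferS hn hε hl1 hl21 ha' hb' ha hb h.symm w (by omega)
            (Or.inr (by rw [eB']; exact hw))
            (by rw [eA']; intro hc; linarith)
            (by rw [eB']; intro hc; linarith)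
          rcases this with h1 | h1
          · rw [eA, hav] at h1
            have hvw : v = w := by
              have : (v:ℝ) = (w:ℝ) := by linarith
              exact_mod_cast this
            rw [← hvw] at hw
            rw [hw] at hga'
            linarith [hav', hvR]
          · rw [eB, hk] at h1
            have h2 : ((v - w : ℤ):ℝ) = 2*ε := by push_cast; linarith
            exact two_eps_ne_int hε hε2 _ h2
        · -- b' last step down
          have hσg : (pt b' n).2 < (pt b' (n-1)).2 := by linarith
          by_cases heq : (pt b (n-1)).2 = (pt b' (n-1)).2
          · have hx : (pt b' n).2 = (v:ℝ) - ε := by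
              have h9 : (pt b' n).2 = (pt b' (n-1)).2 - 1 - ε := by linarith
              rw [← heq, hbn1] at h9
              linarith
            rw [hx] at hga'
            linarith [hav', hvR]
          · exact rightStairs hn hε hl1 hl21 ha hb ha' hb' h (Or.inr ⟨hσf, hσg⟩)
              ⟨n-1, le_refl _, heq⟩
    · -- not kissing : spin corner of p at v transfers to p'
      have := transferS hn hε hl1 hl21 ha hb ha' hb' h v (by omega)
        (Or.inl (by rw [eA]; exact hav))
        (by rw [eA]; intro hc; rw [hav] at hc; linarith)
        (by rw [eB]; exact hk)
      rcases this with h1 | h1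
      · rw [eA'] at h1
        rcases ha'.2.2.2.2.2 with hal' | hal'
        · have h9 : (pt a' (n-1)).2 = (v:ℝ) - 1 := by linarith
          rw [hgapR] at h9
          linarith
        · have h9 : (pt a' (n-1)).2 = (v:ℝ) + 1 + 2*ε := by linarith
          rw [hgapR] at h9
          linarith
      · rw [eB'] at h1
        have hub : (pt a' n).2 ≤ (va:ℝ) - 2*(m:ℝ)*2 + 1 + ε := by
          rcases ha'.2.2.2.2.2 with hal' | hal' <;> linarith [hgapR]
        rw [h1] at hga'
        linarith [hvR]
  · -- a's last step down : interior corner at n-1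
    have h4 : F ((n-1)+1) < F (n-1) := by
      rw [show n-1+1 = n by omega]
      show (pt a n).2 < (pt a (n-1)).2
      have h9 : (pt a n).2 - (pt a (n-1)).2 = -(1+ε) := hal
      linarith
    have h3 : F (n-1-1) < F (n-1) := by linarith
    have := hTf (n-1) (by omega) (le_refl _) h3 h4
    linarith

set_option maxHeartbeats 1000000 in
lemma stmtBi {n : ℕ} {ε : ℝ} {l₁ l₂ : ℤ} (hn : 2 ≤ n) (hε : 0 < ε) (hε2 : ε < 1/2)
    (hl1 : l₁ % 2 = 1) (hl21 : (l₂ - l₁) % 4 = 2)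
    {a b a' b' : List (ℝ × ℝ)}
    (ha : a ∈ pathsBspin n ε l₁) (hb : b ∈ pathsBspin n ε l₂)
    (ha' : a' ∈ pathsBspin n ε l₁) (hb' : b' ∈ pathsBspin n ε l₂)
    (hga : 0 < (pt a n).2 - (pt b n).2)
    (hga' : 0 < (pt a' n).2 - (pt b' n).2)
    (h : Cp (.B n ε) (a ++ b.reverse) false = Cp (.B n ε) (a' ++ b'.reverse) false) :
    a ++ b.reverse = a' ++ b'.reverse := by
  classical
  have hla : a.length = n + 1 := ha.1
  have hlb : b.length = n + 1 := hb.1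
  have hla' : a'.length = n + 1 := ha'.1
  have hlb' : b'.length = n + 1 := hb'.1
  have hl2 : l₂ % 2 = 1 := by omega
  have hlen : (a ++ b.reverse).length = 2*n+2 := by
    simp only [List.length_append, List.length_reverse]; omega
  have hlen' : (a' ++ b'.reverse).length = 2*n+2 := by
    simp only [List.length_append, List.length_reverse]; omega
  have hX := xF_spec hn hl1 hl21 ha hb
  have hX' := xF_spec hn hl1 hl21 ha' hb'
  set f : ℕ → ℝ := fun u => (pt (a++b.reverse) u).2 with hfd
  set g : ℕ → ℝ := fun u => (pt (a'++b'.reverse) u).2 with hgd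
  by_contra hne
  have hdiff : ∃ u, f u ≠ g u := by
    by_contra hall
    push_neg at hall
    apply hne
    apply list_eq_of_pt _ _ (by rw [hlen, hlen'])
    intro u hu
    rw [hlen] at hu
    refine Prod.ext ?_ (hall u)
    rw [hX u hu, hX' u hu]
  set r := Nat.find hdiff with hrd
  have hrne : f r ≠ g r := Nat.find_spec hdiff
  have hrmin : ∀ u, u < r → f u = g u := by
    intro u hu
    by_contra hc
    have h2 : r ≤ u := by rw [hrd]; exact Nat.find_le hc
    omega
  have hr0 : 0 < r := by
    rcases Nat.eq_zero_or_pos r with h0 | h0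
    · exfalso
      apply hrne
      rw [h0]
      show (pt (a++b.reverse) 0).2 = (pt (a'++b'.reverse) 0).2
      rw [ptP_a a b hla 0 (by omega), ptP_a a' b' hla' 0 (by omega),
        ha.2.2.2.1, ha'.2.2.2.1]
    · exact h0
  have hr2n : r ≤ 2*n := by
    by_contra hc
    push_neg at hc
    apply hrne
    rcases Nat.lt_or_ge r (2*n+2) with h1 | h1
    · have he : r = 2*n+1 := by omega
      show (pt (a++b.reverse) r).2 = (pt (a'++b'.reverse) r).2
      rw [he, ptP_b a b hla hlb _ (by omega) (by omega),
        ptP_b a' b' hla' hlb' _ (by omega) (by omega),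
        show 2*n+1-(2*n+1) = 0 by omega, hb.2.2.2.1, hb'.2.2.2.1]
    · show (pt (a++b.reverse) r).2 = (pt (a'++b'.reverse) r).2
      rw [pt, pt, List.getD_eq_getElem?_getD, List.getD_eq_getElem?_getD,
        List.getElem?_eq_none (by omega : (a++b.reverse).length ≤ r),
        List.getElem?_eq_none (by omega : (a'++b'.reverse).length ≤ r)]
  have hminA : ∀ u, u < r → u ≤ n → (pt a u).2 = (pt a' u).2 := by
    intro u hu hun
    have h5 := hrmin u hu
    rwa [show f u = (pt (a++b.reverse) u).2 from rfl,
      show g u = (pt (a'++b'.reverse) u).2 from rfl,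
      ptP_a a b hla u hun, ptP_a a' b' hla' u hun] at h5
  have hminB : ∀ u, 2*n+1-r < u → u ≤ n → (pt b u).2 = (pt b' u).2 := by
    intro u hu hun
    have h5 := hrmin (2*n+1-u) (by omega)
    rwa [show f (2*n+1-u) = (pt (a++b.reverse) (2*n+1-u)).2 from rfl,
      show g (2*n+1-u) = (pt (a'++b'.reverse) (2*n+1-u)).2 from rfl,
      ptP_b a b hla hlb _ (by omega) (by omega),
      ptP_b a' b' hla' hlb' _ (by omega) (by omega),
      show 2*n+1-(2*n+1-u) = u by omega] at h5
  rcases Nat.lt_or_ge r n with hcase | hcase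
  · -- 1 ≤ r ≤ n-1
    have hsf := ha.2.2.2.2.1 (r-1) (by omega)
    have hsg := ha'.2.2.2.2.1 (r-1) (by omega)
    rw [show r - 1 + 1 = r by omega] at hsf hsg
    have hfr1 : (pt a (r-1)).2 = (pt a' (r-1)).2 := hminA (r-1) (by omega) (by omega)
    have hrneA : (pt a r).2 ≠ (pt a' r).2 := by
      intro hc
      apply hrne
      show (pt (a++b.reverse) r).2 = (pt (a'++b'.reverse) r).2
      rw [ptP_a a b hla r (by omega), ptP_a a' b' hla' r (by omega)]
      exact hc
    rcases hsf with h1 | h1 <;> rcases hsg with h2 | h2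
    · exact hrneA (by linarith)
    · exact leftAux hn hε hε2 hl1 hl21 ha hb ha' hb' h hga hga' r hr0 (by omega)
        (fun u hu => hminA u (by omega) (by omega)) (by linarith) (by linarith)
    · exact leftAux hn hε hε2 hl1 hl21 ha' hb' ha hb h.symm hga' hga r hr0 (by omega)
        (fun u hu => (hminA u (by omega) (by omega)).symm) (by linarith) (by linarith)
    · exact hrneA (by linarith)
  rcases Nat.lt_or_ge r (n+1) with hcase1 | hcase1
  · -- r = n
    have hre : r = n := by omega
    have hfr1 : (pt a (n-1)).2 = (pt a' (n-1)).2 := hminA (n-1) (by omega) (by omega)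
    have hrneA : (pt a n).2 ≠ (pt a' n).2 := by
      intro hc
      apply hrne
      rw [hre]
      show (pt (a++b.reverse) n).2 = (pt (a'++b'.reverse) n).2
      rw [ptP_a a b hla n (le_refl n), ptP_a a' b' hla' n (le_refl n)]
      exact hc
    rcases ha.2.2.2.2.2 with h1 | h1 <;> rcases ha'.2.2.2.2.2 with h2 | h2
    · exact hrneA (by linarith)
    · exact midAux hn hε hε2 hl1 hl21 ha hb ha' hb' h hga hga' hfr1
        (by linarith) (by linarith)
    · exact midAux hn hε hε2 hl1 hl21 ha' hb' ha hb h.symm hga' hga hfr1.symm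
        (by linarith) (by linarith)
    · exact hrneA (by linarith)
  rcases Nat.lt_or_ge r (n+2) with hcase2 | hcase2
  · -- r = n+1
    have hre : r = n+1 := by omega
    have hAeq : (pt a n).2 = (pt a' n).2 := hminA n (by omega) (le_refl n)
    have hneB : (pt b n).2 ≠ (pt b' n).2 := by
      intro hc
      apply hrne
      rw [hre]
      show (pt (a++b.reverse) (n+1)).2 = (pt (a'++b'.reverse) (n+1)).2
      rw [ptP_b a b hla hlb _ (by omega) (by omega),
        ptP_b a' b' hla' hlb' _ (by omega) (by omega),
        show 2*n+1-(n+1) = n by omega]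
      exact hc
    rcases hb.2.2.2.2.2 with h1 | h1
    · exact midBAux hn hε hε2 hl1 hl21 ha hb ha' hb' h hga hAeq hneB (by linarith)
    rcases hb'.2.2.2.2.2 with h2 | h2
    · exact midBAux hn hε hε2 hl1 hl21 ha' hb' ha hb h.symm hga' hAeq.symm
        (Ne.symm hneB) (by linarith)
    by_cases heq : (pt b (n-1)).2 = (pt b' (n-1)).2
    · exact hneB (by linarith)
    · exact rightStairs hn hε hl1 hl21 ha hb ha' hb' h
        (Or.inr ⟨by linarith, by linarith⟩) ⟨n-1, le_refl _, heq⟩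
  · -- n+2 ≤ r ≤ 2n
    have hj1 : 1 ≤ 2*n+1-r := by omega
    have hj2 : 2*n+1-r ≤ n-1 := by omega
    have hneBj : (pt b (2*n+1-r)).2 ≠ (pt b' (2*n+1-r)).2 := by
      intro hc
      apply hrne
      show (pt (a++b.reverse) r).2 = (pt (a'++b'.reverse) r).2
      rw [ptP_b a b hla hlb _ (by omega) (by omega),
        ptP_b a' b' hla' hlb' _ (by omega) (by omega)]
      exact hc
    have hBeq : (pt b n).2 = (pt b' n).2 := hminB n (by omega) (le_refl n)
    by_cases heq : (pt b (n-1)).2 = (pt b' (n-1)).2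
    · exact rightStairs hn hε hl1 hl21 ha hb ha' hb' h (Or.inl heq)
        ⟨2*n+1-r, hj2, hneBj⟩
    · obtain ⟨vb, hvb, _⟩ := spinVal hl2 hb (n-1) (by omega)
      obtain ⟨vb', hvb', _⟩ := spinVal hl2 hb' (n-1) (by omega)
      rcases hb.2.2.2.2.2 with h1 | h1 <;> rcases hb'.2.2.2.2.2 with h2 | h2
      · exact heq (by linarith)
      · exfalso
        have h9 : ((vb' - vb - 2 : ℤ):ℝ) = 2*ε := by push_cast; linarith
        exact two_eps_ne_int hε hε2 _ h9
      · exfalso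
        have h9 : ((vb - vb' - 2 : ℤ):ℝ) = 2*ε := by push_cast; linarith
        exact two_eps_ne_int hε hε2 _ h9
      · exact rightStairs hn hε hl1 hl21 ha hb ha' hb' h
          (Or.inr ⟨by linarith, by linarith⟩) ⟨2*n+1-r, hj2, hneBj⟩

end TypeB

/-- any path in `𝒫_{i,k}` is uniquely determined by its set of lower corners. -/
theorem stmt2 (S : Setting) (hS : S.valid) (i : ℕ) (k : ℤ) (hik : (i, k) ∈ X S)
    (p p' : List (ℝ × ℝ)) (hp : p ∈ P S i k) (hp' : p' ∈ P S i k)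
    (h : Cp S p false = Cp S p' false) : p = p' := by
  match S with
  | .A n => exact stmtA n hS i k hik p p' hp hp' h
  | .B n e =>
    obtain ⟨hn, he, he2⟩ := hS
    by_cases hi : i = n
    · have hk : k % 2 = 1 := by
        rcases (hik : (i, k) ∈ XB n) with ⟨_, hk⟩ | ⟨_, hlt, _⟩
        · exact hk
        · omega
      have hp2 : p ∈ pathsB n e i k := hp
      have hp2' : p' ∈ pathsB n e i k := hp'
      rw [pathsB, if_pos hi] at hp2 hp2'
      exact stmtBspin hn he hk hp2 hp2' h
    · rcases (hik : (i, k) ∈ XB n) with ⟨hin, _⟩ | ⟨hi1, hi2, hk⟩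
      · exact absurd hin hi
      · have hp2 : p ∈ pathsB n e i k := hp
        have hp2' : p' ∈ pathsB n e i k := hp'
        rw [pathsB, if_neg hi] at hp2 hp2'
        obtain ⟨a, b, ha, hb, hpe, hxe, hga⟩ := hp2
        obtain ⟨a', b', ha', hb', hpe', hxe', hga'⟩ := hp2'
        subst hpe
        subst hpe'
        exact stmtBi hn he he2 (by omega) (by omega) ha hb ha' hb' hga hga' h

end Paper
end

section
/- Let the setting be type A_N or type B_N, let (i_t,k_t), 1 ≤ t ≤ T, be a snake, and let (p_1,…,p_T) ∈ P̄_{(i_t,k_t)} be a non-overlapping tuple. Suppose (i,k) ∈ C_{p_t,+} (resp. (i,k) ∈ C_{p_t,−}) for some 1 ≤ t ≤ T. Then: (i) (i,k) ∉ C_{p_s,+} (resp. (i,k) ∉ C_{p_s,−}) for every s ≠ t; (ii) in type A, (i,k) ∉ C_{p_s,−} (resp. (i,k) ∉ C_{p_s,+}) for every 1 ≤ s ≤ T; in type B, if (i,k) ∈ C_{p_s,−} (resp. (i,k) ∈ C_{p_s,+}) for some 1 ≤ s ≤ T, then s = t+1 (resp. s = t−1) and i = N. -/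
namespace Paper

lemma pt_mem {p : List (ℝ × ℝ)} {r : ℕ} (h : r < p.length) : pt p r ∈ p := by
  unfold pt; rw [List.getD_eq_getElem _ _ h]; exact List.getElem_mem _

lemma pt_append_left_s6 {a c : List (ℝ × ℝ)} {u : ℕ} (h : u < a.length) :
    pt (a ++ c) u = pt a u := by
  unfold pt
  rw [List.getD_eq_getElem _ _ (by simp; omega), List.getD_eq_getElem _ _ h,
    List.getElem_append_left h]

lemma pt_append_right_s6 {a c : List (ℝ × ℝ)} {u : ℕ} (h : u < c.length) :
    pt (a ++ c) (a.length + u) = pt c u := by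
  unfold pt
  rw [List.getD_eq_getElem _ _ (by simp; omega), List.getD_eq_getElem _ _ h,
    List.getElem_append_right (by omega)]
  congr 1; omega

lemma pt_reverse_s6 {b : List (ℝ × ℝ)} {j : ℕ} (h : j < b.length) :
    pt b.reverse j = pt b (b.length - 1 - j) := by
  unfold pt
  rw [List.getD_eq_getElem _ _ (by simp; omega), List.getD_eq_getElem _ _ (by omega),
    List.getElem_reverse]

lemma spin_y_form {n : ℕ} {ε : ℝ} {l : ℤ} {q : List (ℝ × ℝ)} (hn : 1 ≤ n)
    (hq : q ∈ pathsBspin n ε l) :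
    ∃ m : ℤ, (pt q n).2 = (m : ℝ) + ε ∨ (pt q n).2 = (m : ℝ) - ε := by
  obtain ⟨-, -, -, h0, hstep, hlast⟩ := hq
  have key : ∀ u, u ≤ n - 1 → ∃ m : ℤ, (pt q u).2 = (m : ℝ) := by
    intro u
    induction u with
    | zero => intro _; exact ⟨l + 2 * n - 1, by rw [h0]; push_cast; ring⟩
    | succ u ih =>
      intro hu
      obtain ⟨m, hm⟩ := ih (by omega)
      rcases hstep u (by omega) with h | h
      · exact ⟨m + 2, by push_cast; linarith⟩
      · exact ⟨m - 2, by push_cast; linarith⟩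
  obtain ⟨m, hm⟩ := key (n - 1) le_rfl
  rcases hlast with h | h
  · exact ⟨m + 1, Or.inl (by push_cast; linarith)⟩
  · exact ⟨m - 1, Or.inr (by push_cast; linarith)⟩

lemma spin_point_mem {n : ℕ} {ε : ℝ} {l : ℤ} {q : List (ℝ × ℝ)}
    (hq : q ∈ pathsBspin n ε l) : (2 * (n : ℝ) - 1, (pt q n).2) ∈ q := by
  obtain ⟨hlen, -, hx, -⟩ := hq
  have h : (2 * (n : ℝ) - 1, (pt q n).2) = pt q n := by
    rw [← hx]
  rw [h]; exact pt_mem (by omega)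

lemma pathsB_spin_point {n : ℕ} {ε : ℝ} {i : ℕ} {k : ℤ} {p : List (ℝ × ℝ)} (hn : 1 ≤ n)
    (hp : p ∈ pathsB n ε i k) :
    ∃ (y : ℝ) (m : ℤ), (2 * (n : ℝ) - 1, y) ∈ p ∧ (y = (m : ℝ) + ε ∨ y = (m : ℝ) - ε) := by
  by_cases hi : i = n
  · rw [pathsB, if_pos hi] at hp
    obtain ⟨m, hm⟩ := spin_y_form hn hp
    exact ⟨(pt p n).2, m, spin_point_mem hp, hm⟩
  · rw [pathsB, if_neg hi] at hp
    obtain ⟨a, b, ha, hb, hpe, -, -⟩ := hp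
    obtain ⟨m, hm⟩ := spin_y_form hn ha
    exact ⟨(pt a n).2, m, by rw [hpe]; exact List.mem_append_left _ (spin_point_mem ha), hm⟩

lemma spin_x_inj {n : ℕ} {ε : ℝ} {l : ℤ} {q : List (ℝ × ℝ)}
    (hq : q ∈ pathsBspin n ε l) {r r' : ℕ} (hr : r < q.length) (hr' : r' < q.length)
    (hx : (pt q r).1 = (pt q r').1) (hne : (pt q r).1 ≠ 2 * (n : ℝ) - 1) : r = r' := by
  obtain ⟨hlen, hxc, hxn, -⟩ := hq
  have hrn : r ≠ n := by rintro rfl; exact hne hxn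
  have hrn' : r' ≠ n := by rintro rfl; rw [hx] at hne; exact hne hxn
  have h1 : r < n := by omega
  have h2 : r' < n := by omega
  by_cases hl : l % 4 = 3
  · rw [if_pos hl] at hxc
    rw [hxc r h1, hxc r' h2] at hx
    have : (r : ℝ) = (r' : ℝ) := by linarith
    exact_mod_cast this
  · rw [if_neg hl] at hxc
    rw [hxc r h1, hxc r' h2] at hx
    have : (r : ℝ) = (r' : ℝ) := by linarith
    exact_mod_cast this

lemma pathsB_x_inj {n : ℕ} {ε : ℝ} {i' : ℕ} {k' : ℤ} {p : List (ℝ × ℝ)} (hn : 2 ≤ n)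
    (hp : p ∈ pathsB n ε i' k') (hk : i' ≠ n → k' % 2 = 0)
    {r r' : ℕ} (hr : r < p.length) (hr' : r' < p.length)
    (hx : (pt p r).1 = (pt p r').1) (hne : (pt p r).1 ≠ 2 * (n : ℝ) - 1) : r = r' := by
  by_cases hi : i' = n
  · rw [pathsB, if_pos hi] at hp
    exact spin_x_inj hp hr hr' hx hne
  · rw [pathsB, if_neg hi] at hp
    obtain ⟨a, b, ha, hb, hpe, -, -⟩ := hp
    have hla : a.length = n + 1 := ha.1
    have hlb : b.length = n + 1 := hb.1
    have hplen : p.length = 2 * n + 2 := by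
      rw [hpe]; simp only [List.length_append, List.length_reverse, hla, hlb]; omega
    -- index description
    have hptl : ∀ u, u < n + 1 → pt p u = pt a u := by
      intro u hu; rw [hpe]; exact pt_append_left_s6 (by omega)
    have hptr : ∀ j, j < n + 1 → pt p (n + 1 + j) = pt b (n - j) := by
      intro j hj
      rw [hpe]
      have h1 : pt (a ++ b.reverse) (a.length + j) = pt b.reverse j :=
        pt_append_right_s6 (by simp [hlb]; omega)
      rw [hla] at h1
      rw [h1, pt_reverse_s6 (by omega), hlb]
      congr 1
    -- orientations are opposite
    have hodd : (k' - (2 * (n : ℤ) - 2 * (i' : ℤ) - 1)) % 4 = 3 ↔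
        ¬ ((k' + (2 * (n : ℤ) - 2 * (i' : ℤ) - 1)) % 4 = 3) := by
      have := hk hi
      omega
    obtain ⟨-, hxa, hxan, -⟩ := ha
    obtain ⟨-, hxb, hxbn, -⟩ := hb
    -- x coordinates of p
    have hM1 : (pt p n).1 = 2 * (n : ℝ) - 1 := by rw [hptl n (by omega)]; exact hxan
    have hM2 : (pt p (n + 1)).1 = 2 * (n : ℝ) - 1 := by
      have h0 := hptr 0 (by omega)
      simp only [Nat.add_zero, Nat.sub_zero] at h0
      rw [h0]; exact hxbn
    have hrn1 : r ≠ n := by rintro rfl; exact hne hM1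
    have hrn2 : r ≠ n + 1 := by rintro rfl; exact hne hM2
    have hne' : (pt p r').1 ≠ 2 * (n : ℝ) - 1 := by rw [← hx]; exact hne
    have hrn1' : r' ≠ n := by rintro rfl; exact hne' hM1
    have hrn2' : r' ≠ n + 1 := by rintro rfl; exact hne' hM2
    rw [hplen] at hr hr'
    by_cases hor : (k' - (2 * (n : ℤ) - 2 * (i' : ℤ) - 1)) % 4 = 3
    · rw [if_pos hor] at hxa
      rw [if_neg (hodd.mp hor)] at hxb
      have hA : ∀ u, u < n → (pt p u).1 = 2 * (u : ℝ) := by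
        intro u hu; rw [hptl u (by omega)]; exact hxa u hu
      have hB : ∀ u, n + 2 ≤ u → u < 2 * n + 2 → (pt p u).1 = 2 * (u : ℝ) - 4 := by
        intro u h1 h2
        obtain ⟨j, rfl⟩ : ∃ j, u = n + 1 + j := ⟨u - (n + 1), by omega⟩
        rw [hptr j (by omega), hxb (n - j) (by omega)]
        have hjn : ((n - j : ℕ) : ℝ) = (n : ℝ) - (j : ℝ) := by
          have : j ≤ n := by omega
          push_cast [this]; ring
        rw [hjn]; push_cast; ring
      rcases (by omega : r < n ∨ n + 2 ≤ r) with h1 | h1 <;>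
        rcases (by omega : r' < n ∨ n + 2 ≤ r') with h2 | h2
      · rw [hA r h1, hA r' h2] at hx
        have : (r : ℝ) = (r' : ℝ) := by linarith
        exact_mod_cast this
      · exfalso
        rw [hA r h1, hB r' h2 hr'] at hx
        have c1 : (r : ℝ) < (n : ℝ) := by exact_mod_cast h1
        have c2 : (n : ℝ) + 2 ≤ (r' : ℝ) := by exact_mod_cast h2
        linarith
      · exfalso
        rw [hB r h1 hr, hA r' h2] at hx
        have c1 : (r' : ℝ) < (n : ℝ) := by exact_mod_cast h2
        have c2 : (n : ℝ) + 2 ≤ (r : ℝ) := by exact_mod_cast h1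
        linarith
      · rw [hB r h1 hr, hB r' h2 hr'] at hx
        have : (r : ℝ) = (r' : ℝ) := by linarith
        exact_mod_cast this
    · rw [if_neg hor] at hxa
      rw [if_pos (by by_contra hc; exact hor (hodd.mpr hc))] at hxb
      have hA : ∀ u, u < n → (pt p u).1 = 4 * (n : ℝ) - 2 - 2 * (u : ℝ) := by
        intro u hu; rw [hptl u (by omega)]; exact hxa u hu
      have hB : ∀ u, n + 2 ≤ u → u < 2 * n + 2 → (pt p u).1 = 4 * (n : ℝ) + 2 - 2 * (u : ℝ) := by
        intro u h1 h2
        obtain ⟨j, rfl⟩ : ∃ j, u = n + 1 + j := ⟨u - (n + 1), by omega⟩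
        rw [hptr j (by omega), hxb (n - j) (by omega)]
        have hjn : ((n - j : ℕ) : ℝ) = (n : ℝ) - (j : ℝ) := by
          have : j ≤ n := by omega
          push_cast [this]; ring
        rw [hjn]; push_cast; ring
      rcases (by omega : r < n ∨ n + 2 ≤ r) with h1 | h1 <;>
        rcases (by omega : r' < n ∨ n + 2 ≤ r') with h2 | h2
      · rw [hA r h1, hA r' h2] at hx
        have : (r : ℝ) = (r' : ℝ) := by linarith
        exact_mod_cast this
      · exfalso
        rw [hA r h1, hB r' h2 hr'] at hx
        have c1 : (r : ℝ) < (n : ℝ) := by exact_mod_cast h1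
        have c2 : (n : ℝ) + 2 ≤ (r' : ℝ) := by exact_mod_cast h2
        linarith
      · exfalso
        rw [hB r h1 hr, hA r' h2] at hx
        have c1 : (r' : ℝ) < (n : ℝ) := by exact_mod_cast h2
        have c2 : (n : ℝ) + 2 ≤ (r : ℝ) := by exact_mod_cast h1
        linarith
      · rw [hB r h1 hr, hB r' h2 hr'] at hx
        have : (r : ℝ) = (r' : ℝ) := by linarith
        exact_mod_cast this


lemma iotaB_snd (n : ℕ) (z : ℕ × ℤ) : (iotaB n z).2 = z.2 := by
  unfold iotaB; split_ifs <;> rfl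

lemma iotaB_spin_fst (n : ℕ) (k : ℤ) : (iotaB n (n, k)).1 = 2 * (n : ℤ) - 1 := by
  simp [iotaB]

lemma corner_int {n : ℕ} {ε : ℝ} {i : ℕ} {k : ℤ} {p : List (ℝ × ℝ)} {up : Bool}
    (hi : i ≠ n) (h : (i, k) ∈ Cp (.B n ε) p up) :
    ∃ r : ℕ, 1 ≤ r ∧ r + 1 < p.length ∧
      pt p r = (((iotaB n (i, k)).1 : ℝ), (k : ℝ)) ∧
      (iotaB n (i, k)).1 ≠ 2 * (n : ℤ) - 1 ∧
      (if up then (pt p r).2 < (pt p (r - 1)).2 ∧ (pt p r).2 < (pt p (r + 1)).2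
       else (pt p (r - 1)).2 < (pt p r).2 ∧ (pt p (r + 1)).2 < (pt p r).2) := by
  obtain ⟨hX, hd⟩ := h
  rcases hd with ⟨r, h1, h2, h3, h4, h5, h6, h7⟩ | ⟨hin, -⟩
  · refine ⟨r, h1, h2, ?_, h5, h7⟩
    rw [h3]; congr 1; rw [iotaB_snd]
  · exact absurd hin hi

lemma corner_spin_up {n : ℕ} {ε : ℝ} {k : ℤ} {p : List (ℝ × ℝ)}
    (h : ((n : ℕ), k) ∈ Cp (.B n ε) p true) :
    (2 * (n : ℝ) - 1, (k : ℝ) - ε) ∈ p ∧ (2 * (n : ℝ) - 1, (k : ℝ) + ε) ∉ p := by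
  obtain ⟨hX, hd⟩ := h
  rcases hd with ⟨r, -, -, -, -, h5, -⟩ | ⟨-, hm⟩
  · exact absurd (iotaB_spin_fst n k) h5
  · simpa using hm

lemma corner_spin_dn {n : ℕ} {ε : ℝ} {k : ℤ} {p : List (ℝ × ℝ)}
    (h : ((n : ℕ), k) ∈ Cp (.B n ε) p false) :
    (2 * (n : ℝ) - 1, (k : ℝ) + ε) ∈ p ∧ (2 * (n : ℝ) - 1, (k : ℝ) - ε) ∉ p := by
  obtain ⟨hX, hd⟩ := h
  rcases hd with ⟨r, -, -, -, -, h5, -⟩ | ⟨-, hm⟩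
  · exact absurd (iotaB_spin_fst n k) h5
  · simpa using hm

lemma corner_pt {n : ℕ} {ε : ℝ} {i : ℕ} {k : ℤ} {p : List (ℝ × ℝ)} {up : Bool}
    (h : (i, k) ∈ Cp (.B n ε) p up) :
    (if i = n then ((2 * (n : ℝ) - 1, if up then (k : ℝ) - ε else (k : ℝ) + ε) : ℝ × ℝ)
     else (((iotaB n (i, k)).1 : ℝ), (k : ℝ))) ∈ p := by
  by_cases hi : i = n
  · rcases hi.symm with rfl
    rw [if_pos rfl]
    obtain ⟨hX, hd⟩ := h
    rcases hd with ⟨r, -, -, -, -, h5, -⟩ | ⟨-, hm⟩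
    · exact absurd (iotaB_spin_fst n k) h5
    · cases up
      · rw [if_neg (by simp)]
        rw [if_neg (by simp)] at hm
        exact hm.1
      · rw [if_pos rfl]
        rw [if_pos rfl] at hm
        exact hm.1
  · rw [if_neg hi]
    obtain ⟨r, -, h2, h3, -, -⟩ := corner_int hi h
    rw [← h3]; exact pt_mem (by omega)

lemma sameB {n : ℕ} {ε : ℝ} {T : ℕ} {ps : Fin T → List (ℝ × ℝ)}
    (hno : NonOverlapping ps) {s t : Fin T} {i : ℕ} {k : ℤ} {up : Bool} (hst : s ≠ t)
    (h1 : (i, k) ∈ Cp (.B n ε) (ps s) up) (h2 : (i, k) ∈ Cp (.B n ε) (ps t) up) : False := by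
  have m1 := corner_pt h1
  have m2 := corner_pt h2
  rcases hst.lt_or_gt with hlt | hlt
  · exact lt_irrefl _ (hno s t hlt _ m1 _ m2 rfl)
  · exact lt_irrefl _ (hno t s hlt _ m2 _ m1 rfl)

lemma keyB {n : ℕ} {ε : ℝ} (hn : 2 ≤ n) (hε0 : 0 < ε) (hε2 : ε < 1 / 2) {T : ℕ}
    {w : Fin T → ℕ × ℤ} {ps : Fin T → List (ℝ × ℝ)} (hwX : ∀ t, w t ∈ XB n)
    (hmem : ∀ t, ps t ∈ pathsB n ε (w t).1 (w t).2) (hno : NonOverlapping ps)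
    {t s : Fin T} {i : ℕ} {k : ℤ}
    (hup : (i, k) ∈ Cp (.B n ε) (ps t) true) (hdn : (i, k) ∈ Cp (.B n ε) (ps s) false) :
    (s : ℕ) = (t : ℕ) + 1 ∧ i = n := by
  by_cases hi : i = n
  · rcases hi.symm with rfl
    obtain ⟨hT1, hT2⟩ := corner_spin_up hup
    obtain ⟨hS1, hS2⟩ := corner_spin_dn hdn
    refine ⟨?_, rfl⟩
    rcases lt_trichotomy s t with hlt | heq | hlt
    · have g : (2 * (n : ℝ) - 1, (k : ℝ) + ε).2 < (2 * (n : ℝ) - 1, (k : ℝ) - ε).2 :=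
        hno s t hlt _ hS1 _ hT1 rfl
      have g' : (k : ℝ) + ε < (k : ℝ) - ε := g
      linarith
    · rw [heq] at hS1
      exact absurd hS1 hT2
    · by_contra hne
      have hv : (t : ℕ) < (s : ℕ) := hlt
      have hlt2 : (t : ℕ) + 1 < (s : ℕ) := by omega
      have hsT : (s : ℕ) < T := s.isLt
      set u : Fin T := ⟨(t : ℕ) + 1, by omega⟩ with hu
      have htu : t < u := Nat.lt_succ_self (t : ℕ)
      have hus : u < s := hlt2
      obtain ⟨y, m, hy_mem, hy⟩ := pathsB_spin_point (by omega) (hmem u)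
      have g1' : (2 * (n : ℝ) - 1, (k : ℝ) - ε).2 < (2 * (n : ℝ) - 1, y).2 :=
        hno t u htu _ hT1 _ hy_mem rfl
      have g2' : (2 * (n : ℝ) - 1, y).2 < (2 * (n : ℝ) - 1, (k : ℝ) + ε).2 :=
        hno u s hus _ hy_mem _ hS1 rfl
      have g1 : (k : ℝ) - ε < y := g1'
      have g2 : y < (k : ℝ) + ε := g2'
      rcases hy with h | h
      · rw [h] at g1 g2
        have c1 : (m : ℝ) < (k : ℝ) := by linarith
        have c2 : (k : ℝ) - 1 < (m : ℝ) := by linarith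
        have d1 : m < k := by exact_mod_cast c1
        have d2 : k - 1 < m := by exact_mod_cast c2
        omega
      · rw [h] at g1 g2
        have c1 : (k : ℝ) < (m : ℝ) := by linarith
        have c2 : (m : ℝ) < (k : ℝ) + 1 := by linarith
        have d1 : k < m := by exact_mod_cast c1
        have d2 : m < k + 1 := by exact_mod_cast c2
        omega
  · exfalso
    obtain ⟨rt, -, hrt2, hptT, hneT, hcondT⟩ := corner_int hi hup
    obtain ⟨rs, -, hrs2, hptS, -, hcondS⟩ := corner_int hi hdn
    have m2 : (((iotaB n (i, k)).1 : ℝ), (k : ℝ)) ∈ ps t := by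
      rw [← hptT]; exact pt_mem (by omega)
    rcases lt_trichotomy s t with hlt | heq | hlt
    · have m1 : (((iotaB n (i, k)).1 : ℝ), (k : ℝ)) ∈ ps s := by
        rw [← hptS]; exact pt_mem (by omega)
      exact lt_irrefl _ (hno s t hlt _ m1 _ m2 rfl)
    · subst heq
      have hkodd : (w s).1 ≠ n → (w s).2 % 2 = 0 := by
        intro hh
        rcases hwX s with ⟨h1, -⟩ | ⟨-, -, h3⟩
        · exact absurd h1 hh
        · exact h3
      have hreq : rt = rs :=
        pathsB_x_inj hn (hmem s) hkodd (by omega) (by omega)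
          (by rw [hptT, hptS])
          (by rw [hptT]
              intro hc
              have hc' : ((iotaB n (i, k)).1 : ℝ) = 2 * (n : ℝ) - 1 := hc
              apply hneT
              exact_mod_cast hc')
      subst hreq
      rw [if_pos rfl] at hcondT
      rw [if_neg (by simp)] at hcondS
      linarith [hcondT.2, hcondS.2]
    · have m1 : (((iotaB n (i, k)).1 : ℝ), (k : ℝ)) ∈ ps s := by
        rw [← hptS]; exact pt_mem (by omega)
      exact lt_irrefl _ (hno t s hlt _ m2 _ m1 rfl)

lemma ptA_mem {n : ℕ} {i' : ℕ} {k' : ℤ} {p : List (ℝ × ℝ)} (hp : p ∈ pathsA n i' k')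
    {i : ℕ} {k : ℤ} {up : Bool} (h : (i, k) ∈ Cp (.A n) p up) : ((i : ℝ), (k : ℝ)) ∈ p := by
  obtain ⟨h1, h2, h3, -⟩ := h
  have hl : p.length = n + 2 := hp.1
  rw [← h3]
  exact pt_mem (by omega)

lemma A_not_both {n : ℕ} {p : List (ℝ × ℝ)} {i : ℕ} {k : ℤ}
    (h1 : (i, k) ∈ Cp (.A n) p true) (h2 : (i, k) ∈ Cp (.A n) p false) : False := by
  obtain ⟨-, -, -, h4, -⟩ := h1
  obtain ⟨-, -, -, h4', -⟩ := h2
  rw [if_pos rfl] at h4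
  rw [if_neg (by simp)] at h4'
  rw [h4'] at h4
  norm_num at h4

lemma keyA {n : ℕ} {T : ℕ} {w : Fin T → ℕ × ℤ} {ps : Fin T → List (ℝ × ℝ)}
    (hmem : ∀ t, ps t ∈ pathsA n (w t).1 (w t).2) (hno : NonOverlapping ps)
    {s t : Fin T} {i : ℕ} {k : ℤ} {b b' : Bool} (hst : s ≠ t)
    (h1 : (i, k) ∈ Cp (.A n) (ps s) b) (h2 : (i, k) ∈ Cp (.A n) (ps t) b') : False := by
  have m1 : ((i : ℝ), (k : ℝ)) ∈ ps s := ptA_mem (hmem s) h1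
  have m2 : ((i : ℝ), (k : ℝ)) ∈ ps t := ptA_mem (hmem t) h2
  rcases hst.lt_or_gt with hlt | hlt
  · exact lt_irrefl _ (hno s t hlt _ m1 _ m2 rfl)
  · exact lt_irrefl _ (hno t s hlt _ m2 _ m1 rfl)


/-- disjointness of corners for non-overlapping tuples of paths attached to a
snake. If `(i,k)` is an upper (resp. lower) corner of `p_t`, then (i) it is not an upper
(resp. lower) corner of any `p_s`, `s ≠ t`; and (ii) in type A it is not a lower (resp.
upper) corner of any `p_s`, while in type B if it is a lower (resp. upper) corner of some
`p_s` then `s = t+1` (resp. `s = t-1`) and `i = N`. -/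
theorem stmt6 (S : Setting) (hS : S.valid) {T : ℕ} (hT : 1 ≤ T)
    (w : Fin T → ℕ × ℤ) (hw : IsSnake S w)
    (ps : Fin T → List (ℝ × ℝ)) (hps : ps ∈ PBar S w)
    (t : Fin T) (i : ℕ) (k : ℤ) :
    ((i, k) ∈ Cp S (ps t) true →
      (∀ s : Fin T, s ≠ t → (i, k) ∉ Cp S (ps s) true) ∧
      (∀ s : Fin T, (i, k) ∈ Cp S (ps s) false →
        (∃ n ε, S = Setting.B n ε) ∧ (s : ℕ) = (t : ℕ) + 1 ∧ i = S.N)) ∧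
    ((i, k) ∈ Cp S (ps t) false →
      (∀ s : Fin T, s ≠ t → (i, k) ∉ Cp S (ps s) false) ∧
      (∀ s : Fin T, (i, k) ∈ Cp S (ps s) true →
        (∃ n ε, S = Setting.B n ε) ∧ (s : ℕ) + 1 = (t : ℕ) ∧ i = S.N)) := by
  obtain ⟨hpmem, hno⟩ := hps
  cases S with
  | A n =>
    constructor
    · intro h
      refine ⟨fun s hst hc => keyA hpmem hno hst hc h, fun s hc => ?_⟩
      exfalso
      by_cases hst : s = t
      · subst hst; exact A_not_both h hc
      · exact keyA hpmem hno hst hc h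
    · intro h
      refine ⟨fun s hst hc => keyA hpmem hno hst hc h, fun s hc => ?_⟩
      exfalso
      by_cases hst : s = t
      · subst hst; exact A_not_both hc h
      · exact keyA hpmem hno hst hc h
  | B n ε =>
    obtain ⟨hn, hε0, hε2⟩ := hS
    have hwX : ∀ t, w t ∈ XB n := hw.1
    constructor
    · intro h
      refine ⟨fun s hst hc => (sameB hno hst hc h).elim, fun s hc => ?_⟩
      obtain ⟨h1, h2⟩ := keyB hn hε0 hε2 hwX hpmem hno h hc
      exact ⟨⟨n, ε, rfl⟩, h1, h2⟩
    · intro h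
      refine ⟨fun s hst hc => (sameB hno hst hc h).elim, fun s hc => ?_⟩
      obtain ⟨h1, h2⟩ := keyB hn hε0 hε2 hwX hpmem hno hc h
      exact ⟨⟨n, ε, rfl⟩, h1.symm, h2⟩

end Paper
end
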